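/- arXiv:math/0203156 — 4 statements merged into one kernel-verified Lean document; each statement's English description precedes it below -/
import Mathlib

section
/- Let Ω be a bounded hyperconvex domain in ℂⁿ with fixed distinct poles w₁,…,w_k ∈ Ω, fixed weights ν ∈ (ℝ⁺)^k, and let P = {μ ∈ (ℝ⁺)^k : g_ν = g_μ + g_{ν−μ}}, where g_λ denotes the pluricomplex Green function with pole w_j of weight λ_j. Then P is a convex subset of (ℝ⁺)^k. -/
open Complex Metric Set Filter Topology

noncomputable section

/-- Extended logarithm, taking the value `-∞` at `0` (and on nonpositive reals). -/
def elog (x : ℝ) : EReal := if x ≤ 0 then (⊥ : EReal) else ((Real.log x : ℝ) : EReal)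

variable {E : Type*} [NormedAddCommGroup E] [NormedSpace ℂ E]

/-- `u : E → [-∞, ∞)` is plurisubharmonic on `Ω`: it is upper semicontinuous on `Ω`,
not identically `-∞`, and its restriction to every complex line is subharmonic, expressed
via the harmonic-majorant property on closed discs (majorants being real parts of
holomorphic functions). -/
def PlurisubharmonicOn (Ω : Set E) (u : E → EReal) : Prop :=
  UpperSemicontinuousOn u Ω ∧ (∃ z ∈ Ω, u z ≠ ⊥) ∧
    ∀ a b : E, ∀ r : ℝ, 0 < r →
      (∀ ζ : ℂ, ‖ζ‖ ≤ r → a + ζ • b ∈ Ω) →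
      ∀ F : ℂ → ℂ, DifferentiableOn ℂ F (Metric.closedBall 0 r) →
        (∀ ζ : ℂ, ‖ζ‖ = r → u (a + ζ • b) ≤ ((F ζ).re : EReal)) →
        ∀ ζ : ℂ, ‖ζ‖ ≤ r → u (a + ζ • b) ≤ ((F ζ).re : EReal)

/-- `u` is negative plurisubharmonic on `Ω`. -/
def NegPSH (Ω : Set E) (u : E → EReal) : Prop :=
  PlurisubharmonicOn Ω u ∧ ∀ z ∈ Ω, u z ≤ 0

/-- `u` is an extremal point of the convex cone of negative plurisubharmonic
functions on `Ω`: any decomposition `u = u₁ + u₂` within the cone has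
`u₁ = c₁ u` and `u₂ = c₂ u` with `c₁, c₂ ≥ 0`. -/
def ExtremalIn (Ω : Set E) (u : E → EReal) : Prop :=
  ∀ u₁ u₂ : E → EReal, NegPSH Ω u₁ → NegPSH Ω u₂ →
    (∀ z ∈ Ω, u z = u₁ z + u₂ z) →
    ∃ c₁ c₂ : ℝ, 0 ≤ c₁ ∧ 0 ≤ c₂ ∧ (∀ z ∈ Ω, u₁ z = (c₁ : EReal) * u z) ∧
      (∀ z ∈ Ω, u₂ z = (c₂ : EReal) * u z)

/-- The defining family for the pluricomplex Green function of `Ω` with poles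
`w 0, …, w (k-1)` and weights `ν 0, …, ν (k-1)`: negative plurisubharmonic functions with
`u(ζ) - ν j · log‖ζ - w j‖` bounded above near each pole `w j`. -/
def greenFamily (Ω : Set E) (k : ℕ) (w : ℕ → E) (ν : ℕ → ℝ) : Set (E → EReal) :=
  {u | PlurisubharmonicOn Ω u ∧ (∀ z ∈ Ω, u z ≤ 0) ∧
    ∀ j < k, ∃ C : ℝ, ∃ ε > 0, ∀ ζ ∈ Ω, ζ ≠ w j → ‖ζ - w j‖ < ε →
      u ζ ≤ ((ν j * Real.log ‖ζ - w j‖ + C : ℝ) : EReal)}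

/-- The pluricomplex Green function of `Ω` with poles `w 0, …, w (k-1)` and weights
`ν 0, …, ν (k-1)`. -/
def green (Ω : Set E) (k : ℕ) (w : ℕ → E) (ν : ℕ → ℝ) (z : E) : EReal :=
  sSup ((fun u => u z) '' greenFamily Ω k w ν)

/-- `Ω` is hyperconvex: it carries a continuous negative plurisubharmonic exhaustion
function `ρ`, i.e. `{ρ < -ε}` is relatively compact in `Ω` for every `ε > 0`. -/
def Hyperconvex (Ω : Set E) : Prop :=
  ∃ ρ : E → ℝ, ContinuousOn ρ Ω ∧
    PlurisubharmonicOn Ω (fun z => ((ρ z : ℝ) : EReal)) ∧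
    (∀ z ∈ Ω, ρ z < 0) ∧
    ∀ ε : ℝ, 0 < ε →
      IsCompact (closure {z ∈ Ω | ρ z < -ε}) ∧ closure {z ∈ Ω | ρ z < -ε} ⊆ Ω


section AuxiliaryLemmas

lemma ereal_le_of_forall_sub {x : ℝ} {c : EReal} (h : ∀ ε : ℝ, 0 < ε → ((x - ε : ℝ) : EReal) ≤ c) :
    (x : EReal) ≤ c := by
  cases c with
  | bot =>
    exfalso
    have := h 1 one_pos
    simp only [le_bot_iff] at this
    exact EReal.coe_ne_bot _ this
  | top => exact le_top
  | coe y =>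
    norm_cast
    have h' : ∀ ε : ℝ, 0 < ε → x - ε ≤ y := fun ε hε => by exact_mod_cast h ε hε
    by_contra hxy
    push_neg at hxy
    linarith [h' ((x - y)/2) (by linarith)]

lemma ereal_le_add_of_forall {a : EReal} {x : ℝ} (h : ∀ ε : ℝ, 0 < ε → a ≤ ((x + ε : ℝ) : EReal)) :
    a ≤ (x : EReal) := by
  cases a with
  | bot => exact bot_le
  | top =>
    exfalso
    have := h 1 one_pos
    exact (EReal.coe_ne_top _) (top_le_iff.mp this)
  | coe z =>
    norm_cast
    have h' : ∀ ε : ℝ, 0 < ε → z ≤ x + ε := fun ε hε => by exact_mod_cast h ε hε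
    by_contra hxy
    push_neg at hxy
    linarith [h' ((z - x)/2) (by linarith)]

-- uniform separation
lemma usc_lsc_unif {α : Type*} [MetricSpace α] {S : Set α} (hS : IsCompact S)
    (f g : α → ℝ) (hf : UpperSemicontinuousOn f S) (hg : LowerSemicontinuousOn g S)
    (hfg : ∀ x ∈ S, f x ≤ g x) {ε : ℝ} (hε : 0 < ε) :
    ∃ δ > 0, ∀ x ∈ S, ∀ y ∈ S, dist x y < δ → f x < g y + ε := by
  -- for each x ∈ S, an open set W x with x ∈ W x, and on W x ∩ S both f < f x + ε/2, g > g x - ε/2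
  have key : ∀ x ∈ S, ∃ W : Set α, IsOpen W ∧ x ∈ W ∧
      ∀ z ∈ W ∩ S, f z < f x + ε/2 ∧ g x - ε/2 < g z := by
    intro x hx
    have h1 : {z | f z < f x + ε/2} ∈ 𝓝[S] x := hf x hx _ (by linarith)
    have h2 : {z | g x - ε/2 < g z} ∈ 𝓝[S] x := hg x hx _ (by linarith)
    rcases mem_nhdsWithin.1 (inter_mem h1 h2) with ⟨U, hUo, hxU, hU⟩
    exact ⟨U, hUo, hxU, fun z hz => ⟨(hU ⟨hz.1, hz.2⟩).1, (hU ⟨hz.1, hz.2⟩).2⟩⟩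
  choose! W hWo hxW hW using key
  have hcov : S ⊆ ⋃ x : S, W x := fun x hx =>
    mem_iUnion.2 ⟨⟨x, hx⟩, hxW x hx⟩
  rcases lebesgue_number_lemma_of_metric hS (fun i : S => hWo i i.2) hcov with ⟨δ, hδ, hball⟩
  refine ⟨δ, hδ, fun x hx y hy hd => ?_⟩
  rcases hball x hx with ⟨i, hi⟩
  have hxW' : x ∈ W i ∩ S := ⟨hi (mem_ball_self hδ), hx⟩
  have hyW' : y ∈ W i ∩ S := ⟨hi (by rwa [mem_ball, dist_comm]), hy⟩
  have h1 := (hW i i.2 x hxW').1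
  have h2 := (hW i i.2 y hyW').2
  have h3 := hfg i i.2
  linarith

lemma interpose {α : Type*} [MetricSpace α] {S : Set α} (hS : IsCompact S) (hne : S.Nonempty)
    (f g : α → ℝ) (M m : ℝ)
    (hf : UpperSemicontinuousOn f S) (hg : LowerSemicontinuousOn g S)
    (hfM : ∀ x ∈ S, f x ≤ M) (hgm : ∀ x ∈ S, m ≤ g x)
    (hfg : ∀ x ∈ S, f x ≤ g x) {ε : ℝ} (hε : 0 < ε) :
    ∃ φ : α → ℝ, Continuous φ ∧ (∀ x ∈ S, f x ≤ φ x) ∧ (∀ x ∈ S, φ x ≤ g x + ε) := by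
  rcases usc_lsc_unif hS f g hf hg hfg hε with ⟨δ, hδ, hsep⟩
  set C : ℝ := max 1 ((M - m)/δ) with hC
  have hC1 : (1:ℝ) ≤ C := le_max_left _ _
  have hC0 : 0 < C := lt_of_lt_of_le one_pos hC1
  have hCδ : M - m ≤ C * δ := by
    calc M - m = ((M-m)/δ) * δ := by field_simp
    _ ≤ C * δ := by apply mul_le_mul_of_nonneg_right (le_max_right _ _) hδ.le
  set T : α → Set ℝ := fun x => (fun y => g y + ε + C * dist x y) '' S with hT
  have hTne : ∀ x, (T x).Nonempty := fun x => hne.image _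
  have hTbdd : ∀ x, BddBelow (T x) := by
    intro x
    refine ⟨m + ε, ?_⟩
    rintro t ⟨y, hy, rfl⟩
    dsimp only
    have := hgm y hy
    have : 0 ≤ C * dist x y := mul_nonneg hC0.le dist_nonneg
    have := hgm y hy
    linarith
  set φ : α → ℝ := fun x => sInf (T x) with hφ
  have hφle : ∀ x, ∀ y ∈ S, φ x ≤ g y + ε + C * dist x y := fun x y hy =>
    csInf_le (hTbdd x) ⟨y, hy, rfl⟩
  have hlip : ∀ x x', φ x ≤ φ x' + C * dist x x' := by
    intro x x'
    have : ∀ t ∈ T x', φ x - C * dist x x' ≤ t := by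
      rintro t ⟨y, hy, rfl⟩
      dsimp only
      have h1 := hφle x y hy
      have h2 : dist x y ≤ dist x x' + dist x' y := dist_triangle x x' y
      nlinarith [hC0.le, dist_nonneg (x := x) (y := x')]
    have := le_csInf (hTne x') this
    linarith
  have hcont : Continuous φ := by
    apply LipschitzWith.continuous (K := ⟨C, hC0.le⟩)
    apply LipschitzWith.of_dist_le_mul
    intro x y
    rw [Real.dist_eq, abs_sub_le_iff]
    constructor
    · have := hlip x y; rw [dist_comm] at this ⊢; show _ ≤ C * _; linarith [hlip x y]
    · have := hlip y x; show _ ≤ C * _; rw [dist_comm y x] at this; linarith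
  refine ⟨φ, hcont, ?_, ?_⟩
  · intro x hx
    apply le_csInf (hTne x)
    rintro t ⟨y, hy, rfl⟩
    dsimp only
    by_cases hd : dist x y < δ
    · have := hsep x hx y hy hd
      have : 0 ≤ C * dist x y := mul_nonneg hC0.le dist_nonneg
      linarith [hsep x hx y hy hd]
    · push_neg at hd
      have : C * δ ≤ C * dist x y := mul_le_mul_of_nonneg_left hd hC0.le
      have := hgm y hy
      have := hfM x hx
      linarith
  · intro x hx
    have := hφle x x hx
    simpa using this


variable {r : ℝ}

lemma sphere_coe_ne_zero (hr : 0 < r) (z : ↥(sphere (0:ℂ) r)) : (z : ℂ) ≠ 0 := by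
  have hz : ‖(z:ℂ)‖ = r := mem_sphere_zero_iff_norm.1 z.2
  intro h
  rw [h, norm_zero] at hz
  exact hr.ne hz

lemma sphere_mul_conj (hr : 0 < r) (z : ↥(sphere (0:ℂ) r)) :
    (z:ℂ) * (starRingEnd ℂ) (z:ℂ) = (r:ℂ)^2 := by
  have hz : ‖(z:ℂ)‖ = r := mem_sphere_zero_iff_norm.1 z.2
  rw [Complex.mul_conj]
  rw [Complex.normSq_eq_norm_sq, hz]
  push_cast
  ring

lemma sphere_conj (hr : 0 < r) (z : ↥(sphere (0:ℂ) r)) :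
    (starRingEnd ℂ) (z:ℂ) = (r:ℂ)^2 * ((z:ℂ))⁻¹ := by
  have h0 : (z:ℂ) ≠ 0 := sphere_coe_ne_zero hr z
  rw [← sphere_mul_conj hr z]
  field_simp

/-- basic real-part Laurent monomial on the sphere -/
def basel (r : ℝ) (hr : 0 < r) (c : ℂ) (n : ℤ) : C(↥(sphere (0:ℂ) r), ℝ) :=
  ⟨fun z => (c * (z:ℂ)^n).re, by
    apply Complex.continuous_re.comp
    apply Continuous.mul continuous_const
    rw [continuous_iff_continuousAt]
    intro z
    exact (continuousAt_zpow₀ _ _ (Or.inl (sphere_coe_ne_zero hr z))).comp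
      continuous_subtype_val.continuousAt⟩

lemma basel_apply (hr : 0 < r) (c : ℂ) (n : ℤ) (z : ↥(sphere (0:ℂ) r)) :
    basel r hr c n z = (c * (z:ℂ)^n).re := rfl

lemma basel_mul (hr : 0 < r) (c d : ℂ) (n m : ℤ) :
    basel r hr c n * basel r hr d m =
      (1/2 : ℝ) • basel r hr (c*d) (n+m)
        + (1/2 : ℝ) • basel r hr (c * (starRingEnd ℂ d) * ((r:ℂ)^2)^m) (n-m) := by
  ext z
  have h0 : (z:ℂ) ≠ 0 := sphere_coe_ne_zero hr z
  simp only [ContinuousMap.mul_apply, ContinuousMap.add_apply, ContinuousMap.smul_apply,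
    basel_apply, smul_eq_mul]
  rw [zpow_add₀ h0, zpow_sub₀ h0]
  set u := c * (z:ℂ)^n with hu
  have hconj : (starRingEnd ℂ) (d * (z:ℂ)^m) = (starRingEnd ℂ) d * ((r:ℂ)^2)^m * ((z:ℂ)^m)⁻¹ := by
    rw [map_mul, map_zpow₀, sphere_conj hr z, mul_zpow, inv_zpow]
    ring
  have key : ∀ v : ℂ, u.re * v.re = 1/2 * (u*v).re + 1/2 * (u * (starRingEnd ℂ) v).re := by
    intro v
    simp [Complex.mul_re, Complex.conj_re, Complex.conj_im]
    ring
  rw [key (d * (z:ℂ)^m), hconj]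
  have e1 : u * (d * (z:ℂ)^m) = c * d * ((z:ℂ)^n * (z:ℂ)^m) := by rw [hu]; ring
  have e2 : u * ((starRingEnd ℂ) d * ((r:ℂ)^2)^m * ((z:ℂ)^m)⁻¹)
      = c * (starRingEnd ℂ) d * ((r:ℂ)^2)^m * ((z:ℂ)^n / (z:ℂ)^m) := by
    rw [hu, div_eq_mul_inv]; ring
  rw [e1, e2]

/-- the span of the Laurent monomial real parts -/
def lspan (r : ℝ) (hr : 0 < r) : Submodule ℝ C(↥(sphere (0:ℂ) r), ℝ) :=
  Submodule.span ℝ {f | ∃ c n, f = basel r hr c n}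

lemma basel_mem (hr : 0 < r) (c : ℂ) (n : ℤ) : basel r hr c n ∈ lspan r hr :=
  Submodule.subset_span ⟨c, n, rfl⟩

lemma lspan_one (hr : 0 < r) : (1 : C(↥(sphere (0:ℂ) r), ℝ)) ∈ lspan r hr := by
  have : (1 : C(↥(sphere (0:ℂ) r), ℝ)) = basel r hr 1 0 := by
    ext z; simp [basel_apply]
  rw [this]; exact basel_mem hr 1 0

lemma lspan_mul (hr : 0 < r) : ∀ x y : C(↥(sphere (0:ℂ) r), ℝ),
    x ∈ lspan r hr → y ∈ lspan r hr → x * y ∈ lspan r hr := by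
  intro x y hx hy
  have H : lspan r hr * lspan r hr ≤ lspan r hr := by
    rw [lspan, Submodule.span_mul_span]
    apply Submodule.span_le.2
    rintro f ⟨g, ⟨c, n, rfl⟩, h, ⟨d, m, rfl⟩, rfl⟩
    show basel r hr c n * basel r hr d m ∈ _
    rw [basel_mul hr]
    exact Submodule.add_mem _
      (Submodule.smul_mem _ _ (basel_mem hr _ _))
      (Submodule.smul_mem _ _ (basel_mem hr _ _))
  exact H (Submodule.mul_mem_mul hx hy)

/-- the subalgebra of real parts of Laurent polynomials on the sphere -/
def lalg (r : ℝ) (hr : 0 < r) : Subalgebra ℝ C(↥(sphere (0:ℂ) r), ℝ) :=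
  (lspan r hr).toSubalgebra (lspan_one hr) (lspan_mul hr)

lemma lalg_sep (hr : 0 < r) : (lalg r hr).SeparatesPoints := by
  intro z w hzw
  have hne : (z:ℂ) ≠ (w:ℂ) := fun h => hzw (Subtype.coe_injective h)
  by_cases hre : (z:ℂ).re = (w:ℂ).re
  · refine ⟨(basel r hr (-Complex.I) 1 : C(_, ℝ)), ⟨basel r hr (-Complex.I) 1, basel_mem hr _ _, rfl⟩, ?_⟩
    simp only [basel_apply, zpow_one]
    intro h
    apply hne
    apply Complex.ext hre
    simpa using h
  · refine ⟨(basel r hr 1 1 : C(_, ℝ)), ⟨basel r hr 1 1, basel_mem hr _ _, rfl⟩, ?_⟩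
    simp only [basel_apply, zpow_one, one_mul]
    exact fun h => hre h

lemma mem_lspan_re (hr : 0 < r) (g : C(↥(sphere (0:ℂ) r), ℝ)) (hg : g ∈ lspan r hr) :
    ∃ Q : ℂ → ℂ, Differentiable ℂ Q ∧ ∀ z : ↥(sphere (0:ℂ) r), g z = (Q (z:ℂ)).re := by
  induction hg using Submodule.span_induction with
  | mem f hf =>
    obtain ⟨c, n, rfl⟩ := hf
    by_cases hn : 0 ≤ n
    · refine ⟨fun w => c * w ^ n.toNat, ?_, ?_⟩
      · exact (differentiable_const c).mul (differentiable_pow _)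
      · intro z
        show _ = (c * (z:ℂ) ^ n.toNat).re
        rw [basel_apply, ← zpow_natCast, Int.toNat_of_nonneg hn]
    · refine ⟨fun w => (starRingEnd ℂ c) * ((r:ℂ)^2)^n * w ^ (-n).toNat, ?_, ?_⟩
      · exact (differentiable_const _).mul (differentiable_pow _)
      · intro z
        show _ = ((starRingEnd ℂ c) * ((r:ℂ)^2)^n * (z:ℂ) ^ (-n).toNat).re
        rw [basel_apply]
        have h0 : (z:ℂ) ≠ 0 := sphere_coe_ne_zero hr z
        have : ((z:ℂ)) ^ ((-n).toNat : ℤ) = (z:ℂ) ^ (-n) := by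
          rw [Int.toNat_of_nonneg (by omega)]
        rw [← zpow_natCast ((z:ℂ)) ((-n).toNat), this]
        have hcz : c * (z:ℂ)^n = (starRingEnd ℂ) ((starRingEnd ℂ) (c * (z:ℂ)^n)) := by
          rw [Complex.conj_conj]
        rw [hcz, Complex.conj_re]
        congr 1
        rw [map_mul, map_zpow₀, sphere_conj hr z, mul_zpow, inv_zpow, ← zpow_neg]
        ring
  | zero => exact ⟨0, differentiable_const 0, fun z => by simp⟩
  | add f₁ f₂ _ _ h1 h2 =>
    obtain ⟨Q₁, hQ₁, he₁⟩ := h1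
    obtain ⟨Q₂, hQ₂, he₂⟩ := h2
    exact ⟨Q₁ + Q₂, hQ₁.add hQ₂, fun z => by
      simp [ContinuousMap.add_apply, he₁ z, he₂ z]⟩
  | smul t f _ h =>
    obtain ⟨Q, hQ, he⟩ := h
    refine ⟨fun w => (t:ℂ) * Q w, (differentiable_const _).mul hQ, fun z => ?_⟩
    simp [ContinuousMap.smul_apply, he z, Complex.mul_re]

/-- Stone-Weierstrass: approximate continuous functions on the sphere by real parts of
holomorphic (entire) functions -/
lemma sw_approx (hr : 0 < r) (φ : ℂ → ℝ) (hφ : Continuous φ) {ε : ℝ} (hε : 0 < ε) :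
    ∃ Q : ℂ → ℂ, Differentiable ℂ Q ∧ ∀ z ∈ sphere (0:ℂ) r, |φ z - (Q z).re| ≤ ε := by
  obtain ⟨g, hg⟩ := ContinuousMap.exists_mem_subalgebra_near_continuous_of_separatesPoints
    (lalg r hr) (lalg_sep hr) (fun z : ↥(sphere (0:ℂ) r) => φ (z:ℂ))
    (hφ.comp continuous_subtype_val) ε hε
  obtain ⟨Q, hQ, he⟩ := mem_lspan_re hr (g : C(↥(sphere (0:ℂ) r), ℝ)) g.2
  refine ⟨Q, hQ, fun z hz => ?_⟩
  have := hg ⟨z, hz⟩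
  rw [he ⟨z, hz⟩] at this
  rw [Real.norm_eq_abs] at this
  rw [abs_sub_comm]
  exact (le_of_lt this)


lemma abs_eq_of_mem_sphere {r : ℝ} {z : ℂ} (h : z ∈ sphere (0:ℂ) r) : ‖z‖ = r := by
  simpa [Complex.dist_eq] using h

lemma mem_sphere_of_abs {r : ℝ} {z : ℂ} (h : ‖z‖ = r) : z ∈ sphere (0:ℂ) r := by
  simpa [Complex.dist_eq] using h

-- toReal of truncation
lemma trunc_facts {c : ℝ} (hc : 0 < c) {x : EReal} (hx : x ≤ 0) :
    x ≤ ((((x ⊔ ((-c : ℝ) : EReal)).toReal : ℝ)) : EReal) ∧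
      (((x ⊔ ((-c : ℝ) : EReal)).toReal : ℝ) : EReal) = x ⊔ ((-c : ℝ) : EReal) ∧
      (x ⊔ ((-c : ℝ) : EReal)).toReal ≤ 0 ∧ -c ≤ (x ⊔ ((-c : ℝ) : EReal)).toReal := by
  have h1 : x ⊔ ((-c : ℝ) : EReal) ≠ ⊤ := by
    apply ne_top_of_le_ne_top _ (sup_le hx (by norm_cast; linarith))
    exact EReal.zero_ne_top
  have h2 : x ⊔ ((-c : ℝ) : EReal) ≠ ⊥ := by
    apply ne_bot_of_le_ne_bot _ (le_sup_right)
    exact EReal.coe_ne_bot _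
  have h3 := EReal.coe_toReal h1 h2
  refine ⟨?_, h3, ?_, ?_⟩
  · rw [h3]; exact le_sup_left
  · have : ((x ⊔ ((-c : ℝ) : EReal)).toReal : EReal) ≤ ((0:ℝ) : EReal) := by
      rw [h3]; exact sup_le hx (by norm_cast; linarith)
    exact_mod_cast this
  · have : (((-c:ℝ)) : EReal) ≤ ((x ⊔ ((-c : ℝ) : EReal)).toReal : EReal) := by
      rw [h3]; exact le_sup_right
    exact_mod_cast this

lemma trunc_usc {c : ℝ} {S : Set ℂ} {V : ℂ → EReal} (hV : UpperSemicontinuousOn V S)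
    (hV0 : ∀ z ∈ S, V z ≤ 0) (hc : 0 < c) :
    UpperSemicontinuousOn (fun ζ => ((V ζ) ⊔ ((-c : ℝ) : EReal)).toReal) S := by
  intro x hx t ht
  have hx3 := (trunc_facts hc (hV0 x hx)).2.1
  have h1 : V x ⊔ ((-c : ℝ) : EReal) < (t : EReal) := by
    rw [← hx3]; exact_mod_cast ht
  have h2 : V x < (t : EReal) := lt_of_le_of_lt le_sup_left h1
  have h3 : ((-c : ℝ) : EReal) < (t : EReal) := lt_of_le_of_lt le_sup_right h1
  filter_upwards [hV x hx _ h2, self_mem_nhdsWithin] with z hz hzS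
  have hz3 := (trunc_facts hc (hV0 z hzS)).2.1
  have : V z ⊔ ((-c : ℝ) : EReal) < (t : EReal) := sup_lt_iff.2 ⟨hz, h3⟩
  rw [← hz3] at this
  exact_mod_cast this
section CORE
variable {r : ℝ}

/-- Core analytic lemma: the harmonic-majorant property is preserved under addition. -/
lemma core_sum (hr : 0 < r) (U V : ℂ → EReal)
    (hU0 : ∀ ζ : ℂ, ‖ζ‖ ≤ r → U ζ ≤ 0)
    (hV0 : ∀ ζ : ℂ, ‖ζ‖ ≤ r → V ζ ≤ 0)
    (hUsc : UpperSemicontinuousOn U (sphere (0:ℂ) r))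
    (hVsc : UpperSemicontinuousOn V (sphere (0:ℂ) r))
    (hUmaj : ∀ F : ℂ → ℂ, DifferentiableOn ℂ F (Metric.closedBall 0 r) →
      (∀ ζ : ℂ, ‖ζ‖ = r → U ζ ≤ ((F ζ).re : EReal)) →
      ∀ ζ : ℂ, ‖ζ‖ ≤ r → U ζ ≤ ((F ζ).re : EReal))
    (hVmaj : ∀ F : ℂ → ℂ, DifferentiableOn ℂ F (Metric.closedBall 0 r) →
      (∀ ζ : ℂ, ‖ζ‖ = r → V ζ ≤ ((F ζ).re : EReal)) →
      ∀ ζ : ℂ, ‖ζ‖ ≤ r → V ζ ≤ ((F ζ).re : EReal))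
    (F : ℂ → ℂ) (hF : DifferentiableOn ℂ F (Metric.closedBall 0 r))
    (hb : ∀ ζ : ℂ, ‖ζ‖ = r → U ζ + V ζ ≤ ((F ζ).re : EReal)) :
    ∀ ζ : ℂ, ‖ζ‖ ≤ r → U ζ + V ζ ≤ ((F ζ).re : EReal) := by
  -- bound for |Re F| on the closed ball
  have hFc : ContinuousOn (fun ζ => (F ζ).re) (Metric.closedBall (0:ℂ) r) :=
    Complex.continuous_re.comp_continuousOn hF.continuousOn
  obtain ⟨K, hK⟩ : ∃ K : ℝ, ∀ ζ ∈ Metric.closedBall (0:ℂ) r, |(F ζ).re| ≤ K := by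
    obtain ⟨ζ₀, _, hζ₀⟩ := (isCompact_closedBall (0:ℂ) r).exists_isMaxOn
      ⟨0, mem_closedBall_self hr.le⟩ (hFc.abs)
    exact ⟨|(F ζ₀).re|, hζ₀⟩
  have hK0 : 0 ≤ K := le_trans (abs_nonneg _) (hK 0 (mem_closedBall_self hr.le))
  set c : ℝ := K + 1 with hc
  have hcpos : 0 < c := by linarith
  -- sphere membership conversions
  have habs_mem : ∀ ζ : ℂ, ζ ∈ sphere (0:ℂ) r → ‖ζ‖ ≤ r := fun ζ hζ =>
    (abs_eq_of_mem_sphere hζ).le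
  have hsub : sphere (0:ℂ) r ⊆ Metric.closedBall (0:ℂ) r := sphere_subset_closedBall
  -- truncations
  set Ur : ℂ → ℝ := fun ζ => ((U ζ) ⊔ ((-c : ℝ) : EReal)).toReal with hUr
  set Vr : ℂ → ℝ := fun ζ => ((V ζ) ⊔ ((-c : ℝ) : EReal)).toReal with hVr
  set Wr : ℂ → ℝ := fun ζ => (F ζ).re - Vr ζ with hWr
  have hUS : ∀ ζ ∈ sphere (0:ℂ) r, U ζ ≤ 0 := fun ζ hζ => hU0 ζ (habs_mem ζ hζ)
  have hVS : ∀ ζ ∈ sphere (0:ℂ) r, V ζ ≤ 0 := fun ζ hζ => hV0 ζ (habs_mem ζ hζ)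
  -- Ur usc, Wr lsc on sphere
  have hUrusc : UpperSemicontinuousOn Ur (sphere (0:ℂ) r) := trunc_usc hUsc hUS hcpos
  have hVrusc : UpperSemicontinuousOn Vr (sphere (0:ℂ) r) := trunc_usc hVsc hVS hcpos
  have hWrlsc : LowerSemicontinuousOn Wr (sphere (0:ℂ) r) := by
    intro x hx t ht
    have hd : 0 < ((F x).re - Vr x - t)/2 := by
      simp only [hWr] at ht; linarith
    set d := ((F x).re - Vr x - t)/2 with hdd
    have h1 : ∀ᶠ z in 𝓝[sphere (0:ℂ) r] x, Vr z < Vr x + d :=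
      hVrusc x hx (Vr x + d) (by linarith)
    have h2 : ∀ᶠ z in 𝓝[sphere (0:ℂ) r] x, (F x).re - d < (F z).re := by
      have : ContinuousWithinAt (fun ζ => (F ζ).re) (sphere (0:ℂ) r) x :=
        (hFc x (hsub hx)).mono hsub
      have := this.eventually (eventually_gt_nhds (by linarith : (F x).re - d < (F x).re))
      exact this
    filter_upwards [h1, h2] with z hz1 hz2
    simp only [hWr]
    linarith
  -- Ur ≤ Wr on sphere
  have hUrWr : ∀ ζ ∈ sphere (0:ℂ) r, Ur ζ ≤ Wr ζ := by
    intro ζ hζ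
    have hbζ := hb ζ (abs_eq_of_mem_sphere hζ)
    have hKζ := hK ζ (hsub hζ)
    have hUf := trunc_facts hcpos (hUS ζ hζ)
    have hVf := trunc_facts hcpos (hVS ζ hζ)
    by_cases hcase : ((-c : ℝ) : EReal) < U ζ ∧ ((-c : ℝ) : EReal) < V ζ
    · -- both above -c : real inequality
      have hU' : ((Ur ζ : ℝ) : EReal) = U ζ := by
        rw [hUf.2.1]; exact sup_eq_left.2 hcase.1.le
      have hV' : ((Vr ζ : ℝ) : EReal) = V ζ := by
        rw [hVf.2.1]; exact sup_eq_left.2 hcase.2.le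
      have : ((Ur ζ + Vr ζ : ℝ) : EReal) ≤ (((F ζ).re : ℝ) : EReal) := by
        rw [EReal.coe_add, hU', hV']; exact hbζ
      have hreal : Ur ζ + Vr ζ ≤ (F ζ).re := by exact_mod_cast this
      simp only [hWr]; linarith
    · -- some value at most -c
      have hlow : Ur ζ = -c ∨ Vr ζ = -c := by
        rcases not_and_or.1 hcase with h | h
        · left
          have : U ζ ⊔ ((-c : ℝ) : EReal) = ((-c : ℝ) : EReal) :=
            sup_eq_right.2 (not_lt.1 h)
          rw [hUr]; simp only [this]; exact EReal.toReal_coe _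
        · right
          have : V ζ ⊔ ((-c : ℝ) : EReal) = ((-c : ℝ) : EReal) :=
            sup_eq_right.2 (not_lt.1 h)
          rw [hVr]; simp only [this]; exact EReal.toReal_coe _
      have hU2 := hUf.2.2
      have hV2 := hVf.2.2
      have hFlb : -K ≤ (F ζ).re := by
        have := abs_le.1 hKζ; linarith [this.1]
      rcases hlow with h | h
      · simp only [hWr]; rw [h]; simp only [hc] at *; linarith [hV2.1, hV2.2]
      · simp only [hWr]; rw [h]; simp only [hc] at *; linarith [hU2.1, hU2.2]
  -- main epsilon argument
  suffices hmain : ∀ ε : ℝ, 0 < ε → ∀ ζ : ℂ, ‖ζ‖ ≤ r →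
      U ζ + V ζ ≤ (((F ζ).re + ε : ℝ) : EReal) by
    intro ζ hζ
    exact ereal_le_add_of_forall (fun ε hε => hmain ε hε ζ hζ)
  intro ε hε
  have hε3 : 0 < ε/3 := by linarith
  -- interpose
  obtain ⟨φ, hφc, hφ1, hφ2⟩ := interpose (isCompact_sphere (0:ℂ) r)
    (NormedSpace.sphere_nonempty.2 hr.le) Ur Wr 0 (-K) hUrusc hWrlsc
    (fun x hx => (trunc_facts hcpos (hUS x hx)).2.2.1)
    (fun x hx => by
      have := abs_le.1 (hK x (hsub hx))
      have hv := (trunc_facts hcpos (hVS x hx)).2.2.1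
      simp only [hWr]; linarith [this.1])
    hUrWr hε3
  -- Stone–Weierstrass
  obtain ⟨Q, hQd, hQa⟩ := sw_approx hr φ hφc hε3
  -- first majorization : U ≤ Re (Q + ε/3 + ε/3) on the ball
  have hmaj1 : ∀ ζ : ℂ, ‖ζ‖ ≤ r →
      U ζ ≤ (((Q ζ).re + ε/3 : ℝ) : EReal) := by
    have := hUmaj (fun ζ => Q ζ + (((ε/3 : ℝ)) : ℂ))
      ((hQd.differentiableOn).add_const _)
      (fun ζ hζ => by
        have hζs : ζ ∈ sphere (0:ℂ) r := mem_sphere_of_abs hζ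
        have h1 : U ζ ≤ ((Ur ζ : ℝ) : EReal) := (trunc_facts hcpos (hUS ζ hζs)).1
        have h2 : Ur ζ ≤ φ ζ := hφ1 ζ hζs
        have h3 : φ ζ ≤ (Q ζ).re + ε/3 := by
          have := abs_le.1 (hQa ζ hζs); linarith [this.1]
        calc U ζ ≤ ((Ur ζ : ℝ) : EReal) := h1
        _ ≤ (((Q ζ + ((ε/3 : ℝ) : ℂ)).re : ℝ) : EReal) := by
            apply EReal.coe_le_coe_iff.2
            simp only [Complex.add_re, Complex.ofReal_re]
            linarith)
    intro ζ hζ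
    have h := this ζ hζ
    have heq : ((Q ζ + ((ε/3 : ℝ) : ℂ)).re : ℝ) = (Q ζ).re + ε/3 := by
      simp [Complex.add_re]
    rw [heq] at h
    exact h
  -- second majorization : V ≤ Re (F - Q + ε/3) on the ball
  have hmaj2 : ∀ ζ : ℂ, ‖ζ‖ ≤ r →
      V ζ ≤ (((F ζ).re - (Q ζ).re + (ε/3 + ε/3) : ℝ) : EReal) := by
    have := hVmaj (fun ζ => F ζ - Q ζ + (((ε/3 + ε/3 : ℝ)) : ℂ))
      ((hF.sub hQd.differentiableOn).add_const _)
      (fun ζ hζ => by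
        have hζs : ζ ∈ sphere (0:ℂ) r := mem_sphere_of_abs hζ
        have h1 : V ζ ≤ ((Vr ζ : ℝ) : EReal) := (trunc_facts hcpos (hVS ζ hζs)).1
        have h2 : Vr ζ = (F ζ).re - Wr ζ := by simp only [hWr]; ring
        have h3 : Wr ζ ≥ φ ζ - ε/3 := by linarith [hφ2 ζ hζs]
        have h4 : φ ζ ≥ (Q ζ).re - ε/3 := by
          have := abs_le.1 (hQa ζ hζs); linarith [this.2]
        calc V ζ ≤ ((Vr ζ : ℝ) : EReal) := h1
        _ ≤ (((F ζ - Q ζ + (((ε/3 + ε/3 : ℝ)) : ℂ)).re : ℝ) : EReal) := by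
            apply EReal.coe_le_coe_iff.2
            simp only [Complex.add_re, Complex.sub_re, Complex.ofReal_re]
            rw [h2]; linarith)
    intro ζ hζ
    have h := this ζ hζ
    have heq : ((F ζ - Q ζ + (((ε/3 + ε/3 : ℝ)) : ℂ)).re : ℝ) = (F ζ).re - (Q ζ).re + (ε/3 + ε/3) := by
      simp [Complex.add_re, Complex.sub_re]
    rw [heq] at h
    exact h
  -- combine
  intro ζ hζ
  have := add_le_add (hmaj1 ζ hζ) (hmaj2 ζ hζ)
  refine le_trans this ?_
  rw [← EReal.coe_add]
  apply EReal.coe_le_coe_iff.2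
  ring_nf
  linarith

end CORE

section PSHLayer

variable {E : Type*} [NormedAddCommGroup E] [NormedSpace ℂ E] {Ω : Set E}

lemma usc_line {u : E → EReal} (hu : UpperSemicontinuousOn u Ω) (a b : E) {r : ℝ}
    (hmem : ∀ ζ : ℂ, ‖ζ‖ ≤ r → a + ζ • b ∈ Ω) :
    UpperSemicontinuousOn (fun ζ => u (a + ζ • b)) (sphere (0:ℂ) r) := by
  intro x hx t ht
  have hxΩ : a + x • b ∈ Ω := hmem x (abs_eq_of_mem_sphere hx).le
  have h := hu _ hxΩ t ht
  have hL : ContinuousWithinAt (fun ζ : ℂ => a + ζ • b) (sphere (0:ℂ) r) x :=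
    (continuous_const.add (continuous_id.smul continuous_const)).continuousWithinAt
  have hmap : MapsTo (fun ζ : ℂ => a + ζ • b) (sphere (0:ℂ) r) Ω := fun ζ hζ =>
    hmem ζ (abs_eq_of_mem_sphere hζ).le
  exact (hL.tendsto_nhdsWithin hmap).eventually h

/-- the sum of two members of Green families is a member of the Green family
with added weights, provided the sum is not identically `-∞`. -/
lemma greenFamily_add {k : ℕ} {w : ℕ → E} {lam₁ lam₂ : ℕ → ℝ} {u v : E → EReal}
    (hu : u ∈ greenFamily Ω k w lam₁) (hv : v ∈ greenFamily Ω k w lam₂)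
    (hwit : ∃ z ∈ Ω, u z ≠ ⊥ ∧ v z ≠ ⊥) :
    (fun z => u z + v z) ∈ greenFamily Ω k w (fun j => lam₁ j + lam₂ j) := by
  obtain ⟨hups, hu0, hupole⟩ := hu
  obtain ⟨hvps, hv0, hvpole⟩ := hv
  refine ⟨⟨?_, ?_, ?_⟩, ?_, ?_⟩
  · -- usc
    apply (hups.1.add' hvps.1)
    intro x hx
    apply EReal.continuousAt_add
    · exact Or.inl (ne_top_of_le_ne_top EReal.zero_ne_top (hu0 x hx))
    · exact Or.inr (ne_top_of_le_ne_top EReal.zero_ne_top (hv0 x hx))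
  · -- witness
    obtain ⟨z, hz, h1, h2⟩ := hwit
    exact ⟨z, hz, fun h => by rcases EReal.add_eq_bot_iff.1 h with h | h
                              exacts [h1 h, h2 h]⟩
  · -- majorant property
    intro a b r hr hmem F hF hbd
    have habs : ∀ ζ : ℂ, ζ ∈ sphere (0:ℂ) r → ‖ζ‖ ≤ r := fun ζ hζ =>
      (abs_eq_of_mem_sphere hζ).le
    exact core_sum hr (fun ζ => u (a + ζ • b)) (fun ζ => v (a + ζ • b))
      (fun ζ hζ => hu0 _ (hmem ζ hζ)) (fun ζ hζ => hv0 _ (hmem ζ hζ))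
      (usc_line hups.1 a b hmem) (usc_line hvps.1 a b hmem)
      (hups.2.2 a b r hr hmem) (hvps.2.2 a b r hr hmem) F hF hbd
  · -- nonpositive
    intro z hz
    have := add_le_add (hu0 z hz) (hv0 z hz)
    simpa using this
  · -- pole conditions
    intro j hj
    obtain ⟨C₁, ε₁, hε₁, h₁⟩ := hupole j hj
    obtain ⟨C₂, ε₂, hε₂, h₂⟩ := hvpole j hj
    refine ⟨C₁ + C₂, min ε₁ ε₂, lt_min hε₁ hε₂, fun ζ hζ hne hd => ?_⟩
    have hd₁ := lt_of_lt_of_le hd (min_le_left _ _)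
    have hd₂ := lt_of_lt_of_le hd (min_le_right _ _)
    have := add_le_add (h₁ ζ hζ hne hd₁) (h₂ ζ hζ hne hd₂)
    refine le_trans this ?_
    rw [← EReal.coe_add]
    apply EReal.coe_le_coe_iff.2
    apply le_of_eq
    ring

/-- positive scalar multiples of members of the Green family. -/
lemma greenFamily_smul {k : ℕ} {w : ℕ → E} {lam : ℕ → ℝ} {u : E → EReal} {t : ℝ}
    (ht : 0 < t) (hu : u ∈ greenFamily Ω k w lam) :
    (fun z => (t : EReal) * u z) ∈ greenFamily Ω k w (fun j => t * lam j) := by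
  obtain ⟨⟨husc, hwit, hmaj⟩, hu0, hupole⟩ := hu
  have htE : (0 : EReal) < (t : EReal) := by exact_mod_cast ht
  have htne : (t : EReal) ≠ ⊤ := EReal.coe_ne_top t
  have hlt : ∀ (x : EReal) (s : EReal), ((t:EReal) * x < s ↔ x < s / (t:EReal)) := by
    intro x s
    constructor
    · intro h
      by_contra hc
      push_neg at hc
      have := (EReal.div_le_iff_le_mul htE htne).1 hc
      exact absurd this (not_le.2 h)
    · intro h
      by_contra hc
      push_neg at hc
      have : s / (t:EReal) ≤ x := (EReal.div_le_iff_le_mul htE htne).2 hc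
      exact absurd this (not_le.2 h)
  refine ⟨⟨?_, ?_, ?_⟩, ?_, ?_⟩
  · -- usc
    intro x hx s hs
    have := husc x hx _ ((hlt (u x) s).1 hs)
    filter_upwards [this] with z hz
    exact (hlt (u z) s).2 hz
  · -- witness
    obtain ⟨z, hz, h1⟩ := hwit
    refine ⟨z, hz, fun h => h1 ?_⟩
    have h' : (t:EReal) * u z = ⊥ := h
    cases hzz : u z with
    | bot => rfl
    | top => rw [hzz, EReal.mul_top_of_pos htE] at h'; exact absurd h' top_ne_bot
    | coe y => rw [hzz, ← EReal.coe_mul] at h'; exact absurd h' (EReal.coe_ne_bot _)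
  · -- majorant
    intro a b r hr hmem F hF hbd
    have hre : ∀ ζ : ℂ, ((((t⁻¹ : ℝ) : ℂ) * F ζ).re) = t⁻¹ * (F ζ).re := by
      intro ζ
      simp [Complex.mul_re, Complex.ofReal_re, Complex.ofReal_im]
    have key : ∀ ζ : ℂ, ‖ζ‖ ≤ r →
        u (a + ζ • b) ≤ (((t⁻¹ * (F ζ).re : ℝ)) : EReal) := by
      intro ζ hζ
      have := hmaj a b r hr hmem (fun ζ => ((t⁻¹ : ℝ) : ℂ) * F ζ)
        (hF.const_smul ((t⁻¹ : ℝ) : ℂ)) ?_ ζ hζ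
      · rw [hre ζ] at this; exact this
      · intro ξ hξ
        have h := hbd ξ hξ
        have h2 := mul_le_mul_of_nonneg_left h
          (by exact_mod_cast (inv_nonneg.2 ht.le) : (0:EReal) ≤ ((t⁻¹ : ℝ) : EReal))
        rw [← mul_assoc, ← EReal.coe_mul, inv_mul_cancel₀ ht.ne', EReal.coe_one, one_mul] at h2
        rw [← EReal.coe_mul] at h2
        rw [hre ξ]
        exact h2
    intro ζ hζ
    have h2 := mul_le_mul_of_nonneg_left (key ζ hζ)
      (by exact_mod_cast ht.le : (0:EReal) ≤ ((t : ℝ) : EReal))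
    rw [← EReal.coe_mul] at h2
    rw [show t * (t⁻¹ * (F ζ).re) = (F ζ).re by field_simp] at h2
    exact h2
  · -- nonpositive
    intro z hz
    have := mul_le_mul_of_nonneg_left (hu0 z hz) (le_of_lt htE)
    rwa [mul_zero] at this
  · -- poles
    intro j hj
    obtain ⟨C, ε, hε, h⟩ := hupole j hj
    refine ⟨t * C, ε, hε, fun ζ hζ hne hd => ?_⟩
    have := mul_le_mul_of_nonneg_left (h ζ hζ hne hd) (le_of_lt htE)
    rw [← EReal.coe_mul] at this
    refine le_trans this (EReal.coe_le_coe_iff.2 (le_of_eq ?_))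
    ring

end PSHLayer

section GreenLemmas

variable {E : Type*} [NormedAddCommGroup E] [NormedSpace ℂ E] {Ω : Set E}

lemma green_nonpos {k : ℕ} {w : ℕ → E} (lam : ℕ → ℝ) {z : E} (hz : z ∈ Ω) :
    green Ω k w lam z ≤ 0 := by
  apply sSup_le
  rintro x ⟨u, hu, rfl⟩
  exact hu.2.1 z hz

lemma le_green {k : ℕ} {w : ℕ → E} {lam : ℕ → ℝ} {u : E → EReal}
    (hu : u ∈ greenFamily Ω k w lam) (z : E) :
    u z ≤ green Ω k w lam z := le_sSup ⟨u, hu, rfl⟩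

lemma exists_green_near {k : ℕ} {w : ℕ → E} {lam : ℕ → ℝ} {z : E} {α : ℝ}
    (hα : green Ω k w lam z = ((α : ℝ) : EReal)) {ε : ℝ} (hε : 0 < ε) :
    ∃ u ∈ greenFamily Ω k w lam, (((α - ε : ℝ)) : EReal) < u z := by
  have h : (((α - ε : ℝ)) : EReal) < green Ω k w lam z := by
    rw [hα]; exact_mod_cast (by linarith : α - ε < α)
  rw [green] at h
  rcases lt_sSup_iff.1 h with ⟨_, ⟨u, hu, rfl⟩, hlt⟩
  exact ⟨u, hu, hlt⟩

lemma green_real {k : ℕ} {w : ℕ → E} {lam : ℕ → ℝ} {z : E} (hz : z ∈ Ω)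
    (h : green Ω k w lam z ≠ ⊥) :
    ∃ α : ℝ, green Ω k w lam z = ((α : ℝ) : EReal) :=
  ⟨(green Ω k w lam z).toReal,
    (EReal.coe_toReal (ne_top_of_le_ne_top EReal.zero_ne_top (green_nonpos lam hz)) h).symm⟩

lemma green_superadd {k : ℕ} {w : ℕ → E} (lam₁ lam₂ : ℕ → ℝ) {z : E} (hz : z ∈ Ω) :
    green Ω k w lam₁ z + green Ω k w lam₂ z
      ≤ green Ω k w (fun j => lam₁ j + lam₂ j) z := by
  by_cases h1 : green Ω k w lam₁ z = ⊥
  · rw [h1, EReal.bot_add]; exact bot_le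
  by_cases h2 : green Ω k w lam₂ z = ⊥
  · rw [h2, EReal.add_bot]; exact bot_le
  obtain ⟨α, hα⟩ := green_real hz h1
  obtain ⟨β, hβ⟩ := green_real hz h2
  rw [hα, hβ, ← EReal.coe_add]
  apply ereal_le_of_forall_sub
  intro ε hε
  have hε2 : 0 < ε/2 := by linarith
  obtain ⟨u, hu, hult⟩ := exists_green_near hα hε2
  obtain ⟨v, hv, hvlt⟩ := exists_green_near hβ hε2
  have hune : u z ≠ ⊥ := fun hb => by rw [hb] at hult; exact not_lt_bot hult
  have hvne : v z ≠ ⊥ := fun hb => by rw [hb] at hvlt; exact not_lt_bot hvlt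
  have hmem := greenFamily_add hu hv ⟨z, hz, hune, hvne⟩
  have hle := le_green hmem z
  calc (((α + β - ε : ℝ)) : EReal) = (((α - ε/2 : ℝ)) : EReal) + (((β - ε/2 : ℝ)) : EReal) := by
        rw [← EReal.coe_add]; norm_cast; ring
  _ ≤ u z + v z := add_le_add hult.le hvlt.le
  _ ≤ green Ω k w (fun j => lam₁ j + lam₂ j) z := hle

lemma green_concave {k : ℕ} {w : ℕ → E} {t s : ℝ} (ht : 0 < t) (hs : 0 < s)
    (lam₁ lam₂ : ℕ → ℝ) {z : E} (hz : z ∈ Ω) :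
    (t : EReal) * green Ω k w lam₁ z + (s : EReal) * green Ω k w lam₂ z
      ≤ green Ω k w (fun j => t * lam₁ j + s * lam₂ j) z := by
  by_cases h1 : green Ω k w lam₁ z = ⊥
  · rw [h1, EReal.coe_mul_bot_of_pos (by exact_mod_cast ht), EReal.bot_add]; exact bot_le
  by_cases h2 : green Ω k w lam₂ z = ⊥
  · rw [h2, EReal.coe_mul_bot_of_pos (by exact_mod_cast hs), EReal.add_bot]; exact bot_le
  obtain ⟨α, hα⟩ := green_real hz h1
  obtain ⟨β, hβ⟩ := green_real hz h2
  rw [hα, hβ, ← EReal.coe_mul, ← EReal.coe_mul, ← EReal.coe_add]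
  apply ereal_le_of_forall_sub
  intro ε hε
  have hts : 0 < t + s := by linarith
  set δ : ℝ := ε / (t + s) with hδdef
  have hδ : 0 < δ := div_pos hε hts
  obtain ⟨u, hu, hult⟩ := exists_green_near hα hδ
  obtain ⟨v, hv, hvlt⟩ := exists_green_near hβ hδ
  have hu' := greenFamily_smul ht hu
  have hv' := greenFamily_smul hs hv
  have e1 : (((t * (α - δ) : ℝ)) : EReal) ≤ (t : EReal) * u z := by
    rw [EReal.coe_mul]
    exact mul_le_mul_of_nonneg_left hult.le (by exact_mod_cast ht.le)
  have e2 : (((s * (β - δ) : ℝ)) : EReal) ≤ (s : EReal) * v z := by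
    rw [EReal.coe_mul]
    exact mul_le_mul_of_nonneg_left hvlt.le (by exact_mod_cast hs.le)
  have hune : (t : EReal) * u z ≠ ⊥ := fun hb => by
    rw [hb] at e1; exact (EReal.coe_ne_bot _) (le_bot_iff.1 e1)
  have hvne : (s : EReal) * v z ≠ ⊥ := fun hb => by
    rw [hb] at e2; exact (EReal.coe_ne_bot _) (le_bot_iff.1 e2)
  have hmem := greenFamily_add hu' hv' ⟨z, hz, hune, hvne⟩
  have hle := le_green hmem z
  calc (((t * α + s * β - ε : ℝ)) : EReal)
      = (((t * (α - δ) : ℝ)) : EReal) + (((s * (β - δ) : ℝ)) : EReal) := by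
        rw [← EReal.coe_add]
        norm_cast
        have : (t + s) * δ = ε := by
          rw [hδdef]; field_simp
        nlinarith [this]
  _ ≤ (t : EReal) * u z + (s : EReal) * v z := add_le_add e1 e2
  _ ≤ green Ω k w (fun j => t * lam₁ j + s * lam₂ j) z := hle

end GreenLemmas

end AuxiliaryLemmas

/-- For a bounded hyperconvex domain `Ω ⊆ ℂⁿ` with fixed distinct poles `w₁, …, w_k` and
fixed weights `ν ∈ (ℝ⁺)^k`, the set `P = {μ ∈ (ℝ⁺)^k : g_ν = g_μ + g_{ν-μ}}` is convex. -/
theorem statement6 (n k : ℕ) (Ω : Set (EuclideanSpace ℂ (Fin n)))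
    (hopen : IsOpen Ω) (hconn : IsConnected Ω) (hbdd : Bornology.IsBounded Ω)
    (hhyp : Hyperconvex Ω)
    (w : ℕ → EuclideanSpace ℂ (Fin n)) (hw : ∀ j < k, w j ∈ Ω)
    (hinj : ∀ i < k, ∀ j < k, w i = w j → i = j)
    (ν : ℕ → ℝ) (hν : ∀ j < k, 0 ≤ ν j) :
    Convex ℝ {μ : ℕ → ℝ | (∀ j < k, 0 ≤ μ j) ∧
      ∀ z ∈ Ω, green Ω k w ν z = green Ω k w μ z + green Ω k w (fun j => ν j - μ j) z} := by
  intro μ hμ μ' hμ' a b ha hb hab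
  simp only [Set.mem_setOf_eq] at hμ hμ' ⊢
  refine ⟨?_, ?_⟩
  · intro j hj
    have : (a • μ + b • μ') j = a * μ j + b * μ' j := rfl
    rw [this]
    exact add_nonneg (mul_nonneg ha (hμ.1 j hj)) (mul_nonneg hb (hμ'.1 j hj))
  intro z hz
  rcases eq_or_lt_of_le ha with ha0 | ha0
  · -- a = 0, so b = 1 and the combination is μ'
    have hb1 : b = 1 := by linarith
    have hμeq : a • μ + b • μ' = μ' := by
      funext j
      show a * μ j + b * μ' j = μ' j
      rw [← ha0, hb1]; ring
    rw [hμeq]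
    exact hμ'.2 z hz
  rcases eq_or_lt_of_le hb with hb0 | hb0
  · -- b = 0, so a = 1 and the combination is μ
    have ha1 : a = 1 := by linarith
    have hμeq : a • μ + b • μ' = μ := by
      funext j
      show a * μ j + b * μ' j = μ j
      rw [← hb0, ha1]; ring
    rw [hμeq]
    exact hμ.2 z hz
  -- main case : 0 < a, 0 < b
  apply le_antisymm
  · -- ≤ : concavity of the Green function in the weights
    by_cases hbot : green Ω k w ν z = ⊥
    · rw [hbot]; exact bot_le
    have h1 := hμ.2 z hz
    have h2 := hμ'.2 z hz
    have hx1ne : green Ω k w μ z ≠ ⊥ := fun hb => hbot (by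
      rw [h1, hb, EReal.bot_add])
    have hx2ne : green Ω k w (fun j => ν j - μ j) z ≠ ⊥ := fun hb => hbot (by
      rw [h1, hb, EReal.add_bot])
    have hy1ne : green Ω k w μ' z ≠ ⊥ := fun hb => hbot (by
      rw [h2, hb, EReal.bot_add])
    have hy2ne : green Ω k w (fun j => ν j - μ' j) z ≠ ⊥ := fun hb => hbot (by
      rw [h2, hb, EReal.add_bot])
    obtain ⟨x₁, hx₁⟩ := green_real hz hx1ne
    obtain ⟨x₂, hx₂⟩ := green_real hz hx2ne
    obtain ⟨y₁, hy₁⟩ := green_real hz hy1ne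
    obtain ⟨y₂, hy₂⟩ := green_real hz hy2ne
    have hsum : x₁ + x₂ = y₁ + y₂ := by
      have : ((x₁ + x₂ : ℝ) : EReal) = ((y₁ + y₂ : ℝ) : EReal) := by
        rw [EReal.coe_add, EReal.coe_add, ← hx₁, ← hx₂, ← hy₁, ← hy₂, ← h1, ← h2]
      exact_mod_cast this
    -- first concavity application
    have conc1 : ((a * x₁ + b * y₁ : ℝ) : EReal) ≤ green Ω k w (a • μ + b • μ') z := by
      have h := green_concave ha0 hb0 μ μ' hz (k := k) (w := w)
      rw [hx₁, hy₁, ← EReal.coe_mul, ← EReal.coe_mul, ← EReal.coe_add] at h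
      have harg : (fun j => a * μ j + b * μ' j) = a • μ + b • μ' := by
        funext j; rfl
      rwa [harg] at h
    -- second concavity application
    have conc2 : ((a * x₂ + b * y₂ : ℝ) : EReal)
        ≤ green Ω k w (fun j => ν j - (a • μ + b • μ') j) z := by
      have h := green_concave ha0 hb0 (fun j => ν j - μ j) (fun j => ν j - μ' j) hz
        (k := k) (w := w)
      rw [hx₂, hy₂, ← EReal.coe_mul, ← EReal.coe_mul, ← EReal.coe_add] at h
      have harg : (fun j => a * (ν j - μ j) + b * (ν j - μ' j))
          = (fun j => ν j - (a • μ + b • μ') j) := by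
        funext j
        show a * (ν j - μ j) + b * (ν j - μ' j) = ν j - (a * μ j + b * μ' j)
        linear_combination (ν j) * hab
      rwa [harg] at h
    have hgν : green Ω k w ν z = (((a * x₁ + b * y₁) + (a * x₂ + b * y₂) : ℝ) : EReal) := by
      rw [h1, hx₁, hx₂, ← EReal.coe_add]
      norm_cast
      linear_combination (-(x₁+x₂)) * hab + b * hsum
    rw [hgν, EReal.coe_add]
    exact add_le_add conc1 conc2
  · -- ≥ : superadditivity of the Green function in the weights
    have h := green_superadd (a • μ + b • μ') (fun j => ν j - (a • μ + b • μ') j) hz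
      (k := k) (w := w)
    have harg : (fun j => (a • μ + b • μ') j + (ν j - (a • μ + b • μ') j)) = ν := by
      funext j; ring
    rwa [harg] at h
end
end

section
/- Let D×D be the bidisk in ℂ², let a, b ∈ D be distinct and nonzero, and let z = (0, γ) with |ab| < |γ| < min{|a|, |b|}. Write δ_{1,1}(z) for the Lempert function with poles (a,0), (b,0) both of weight 1, and δ_{1,0}(z) for the Lempert function with the single pole (a,0) of weight 1. Then there is no holomorphic disc f: D → D×D with f(0) = z that simultaneously attains the infimum defining δ_{1,1}(z) and the infimum defining δ_{1,0}(z). -/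
open Complex Metric Set Filter Topology

noncomputable section

variable {E : Type*} [NormedAddCommGroup E] [NormedSpace ℂ E]

/-- The open unit bidisk `D × D ⊆ ℂ²`. -/
def bidisk : Set (ℂ × ℂ) := {z | ‖z.1‖ < 1 ∧ ‖z.2‖ < 1}

/-- The Lempert function of `Ω` with poles `w 0, …, w (k-1)` and weights
`ν 0, …, ν (k-1)`: the infimum of `Σ_j ν_j log|ζ_j|` over analytic discs `f : D → Ω` with
`f(0) = z` and `f(ζ_j) = w j` for all `j < k`. -/
def lempert (Ω : Set E) (k : ℕ) (w : ℕ → E) (ν : ℕ → ℝ) (z : E) : EReal :=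
  sInf {d : EReal | ∃ f : ℂ → E, DifferentiableOn ℂ f (Metric.ball 0 1) ∧
    Set.MapsTo f (Metric.ball 0 1) Ω ∧ f 0 = z ∧
    ∃ ζ : ℕ → ℂ, (∀ j < k, ζ j ∈ Metric.ball (0 : ℂ) 1 ∧ f (ζ j) = w j) ∧
      d = ((∑ j ∈ Finset.range k, ν j * Real.log (‖ζ j‖) : ℝ) : EReal)}

noncomputable def mob (p z : ℂ) : ℂ := (p - z) / (1 - (starRingEnd ℂ) p * z)

lemma denom_ne {p z : ℂ} (h : ‖p‖ * ‖z‖ < 1) :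
    1 - (starRingEnd ℂ) p * z ≠ 0 := by
  intro h0
  have : (starRingEnd ℂ) p * z = 1 := by linear_combination -h0
  have := congrArg norm this
  simp [map_mul] at this
  rw [this] at h
  linarith

lemma mob_abs_lt {p z : ℂ} (hp : ‖p‖ < 1) (hz : ‖z‖ < 1) :
    ‖mob p z‖ < 1 := by
  have hap := norm_nonneg p
  have haz := norm_nonneg z
  have hd : 1 - (starRingEnd ℂ) p * z ≠ 0 := denom_ne (by nlinarith)
  rw [mob, norm_div, div_lt_one (norm_pos_iff.mpr hd)]
  have key : Complex.normSq (1 - (starRingEnd ℂ) p * z) - Complex.normSq (p - z)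
      = (1 - Complex.normSq p) * (1 - Complex.normSq z) := by
    simp [Complex.normSq_apply, Complex.sub_re, Complex.sub_im, Complex.mul_re, Complex.mul_im,
      Complex.conj_re, Complex.conj_im, Complex.one_re, Complex.one_im]
    ring
  have h1 : Complex.normSq p < 1 := by rw [← Complex.sq_norm]; nlinarith
  have h2 : Complex.normSq z < 1 := by rw [← Complex.sq_norm]; nlinarith
  have : (‖p - z‖)^2 < (‖1 - (starRingEnd ℂ) p * z‖)^2 := by
    rw [Complex.sq_norm, Complex.sq_norm]; nlinarith
  nlinarith [norm_nonneg (p - z), norm_nonneg (1 - (starRingEnd ℂ) p * z)]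

lemma mob_mob {p z : ℂ} (hp : ‖p‖ < 1) (hz : ‖z‖ < 1) :
    mob p (mob p z) = z := by
  have hap := norm_nonneg p
  have haz := norm_nonneg z
  have hd : 1 - (starRingEnd ℂ) p * z ≠ 0 := denom_ne (by nlinarith)
  have hm := mob_abs_lt hp hz
  have hd2 : 1 - (starRingEnd ℂ) p * mob p z ≠ 0 :=
    denom_ne (by nlinarith [norm_nonneg (mob p z)])
  have hd3 : (1 : ℂ) - p * (starRingEnd ℂ) p ≠ 0 := by
    have := denom_ne (p := p) (z := p) (by nlinarith)
    rwa [mul_comm] at this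
  have hd' : 1 - z * (starRingEnd ℂ) p ≠ 0 := by rwa [mul_comm] at hd
  simp only [mob] at hd2 ⊢
  rw [div_eq_iff hd2]
  field_simp
  ring

lemma mob_zero (p : ℂ) : mob p 0 = p := by simp [mob]

lemma mob_self (p : ℂ) : mob p p = 0 := by simp [mob]

lemma mob_diff {p : ℂ} (hp : ‖p‖ < 1) :
    DifferentiableOn ℂ (mob p) (ball 0 1) := by
  intro z hz
  rw [mem_ball_zero_iff] at hz
  have hd : 1 - (starRingEnd ℂ) p * z ≠ 0 :=
    denom_ne (by nlinarith [norm_nonneg p, norm_nonneg z])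
  exact ((differentiableAt_const p).sub differentiableAt_id).div
    ((differentiableAt_const 1).sub ((differentiableAt_const _).mul differentiableAt_id))
    hd |>.differentiableWithinAt

lemma mob_mapsTo {p : ℂ} (hp : ‖p‖ < 1) :
    MapsTo (mob p) (ball 0 1) (ball 0 1) := fun z hz => by
  rw [mem_ball_zero_iff] at hz ⊢
  exact mob_abs_lt hp hz

/-- Schwarz–Pick type lemma: a self-map of the disc vanishing at `p` is bounded by the
Möbius factor. -/
lemma schwarzPick {f : ℂ → ℂ} {p q : ℂ} (hd : DifferentiableOn ℂ f (ball 0 1))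
    (hm : MapsTo f (ball 0 1) (ball 0 1)) (hp : ‖p‖ < 1) (hq : ‖q‖ < 1)
    (hfp : f p = 0) : ‖f q‖ ≤ ‖mob p q‖ := by
  have hgd : DifferentiableOn ℂ (f ∘ mob p) (ball 0 1) :=
    hd.comp (mob_diff hp) (mob_mapsTo hp)
  have hgm : MapsTo (f ∘ mob p) (ball 0 1) (ball 0 1) := hm.comp (mob_mapsTo hp)
  have hg0 : (f ∘ mob p) 0 = 0 := by simp [Function.comp, mob_zero, hfp]
  have := Complex.norm_le_norm_of_mapsTo_ball hgd (hgm.mono_right ball_subset_closedBall) hg0 (z := mob p q)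
    (by simpa using mob_abs_lt hp hq)
  simpa [Function.comp, mob_mob hp hq] using this

lemma mob_mob_self {p q : ℂ} (hp : ‖p‖ < 1) (hq : ‖q‖ < 1) :
    mob (mob p q) p = -q * ((1 - p * (starRingEnd ℂ) q) / (1 - (starRingEnd ℂ) p * q)) := by
  have hap := norm_nonneg p
  have haq := norm_nonneg q
  have d1 : 1 - (starRingEnd ℂ) p * q ≠ 0 := denom_ne (by nlinarith)
  have d1' : (1 : ℂ) - p * (starRingEnd ℂ) q ≠ 0 := fun h => d1 (by
    have := congrArg (starRingEnd ℂ) h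
    simpa [map_sub, map_mul] using this)
  have d3 : (1 : ℂ) - p * (starRingEnd ℂ) p ≠ 0 := by
    have := denom_ne (p := p) (z := p) (by nlinarith)
    rwa [mul_comm] at this
  have d1'' : (1 : ℂ) - q * (starRingEnd ℂ) p ≠ 0 := by rwa [mul_comm] at d1
  simp only [mob, map_div₀, map_sub, map_mul, Complex.conj_conj, map_one]
  rw [mul_div_assoc']
  have hB : 1 - ((starRingEnd ℂ) p - (starRingEnd ℂ) q) / (1 - p * (starRingEnd ℂ) q) * p ≠ 0 := by
    have hB2 : 1 - ((starRingEnd ℂ) p - (starRingEnd ℂ) q) / (1 - p * (starRingEnd ℂ) q) * p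
        = (1 - p * (starRingEnd ℂ) p) / (1 - p * (starRingEnd ℂ) q) := by
      have d1'' : (1 : ℂ) - (starRingEnd ℂ) q * p ≠ 0 := by rwa [mul_comm] at d1'
      field_simp [d1']
      ring
    rw [hB2]; exact div_ne_zero d3 d1'
  rw [div_eq_div_iff hB d1]
  field_simp
  ring

lemma abs_mob_mob_self {p q : ℂ} (hp : ‖p‖ < 1) (hq : ‖q‖ < 1) :
    ‖mob (mob p q) p‖ = ‖q‖ := by
  rw [mob_mob_self hp hq, norm_mul, norm_neg, norm_div]
  have : ‖1 - p * (starRingEnd ℂ) q‖ = ‖1 - (starRingEnd ℂ) p * q‖ := by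
    rw [← Complex.norm_conj (1 - p * (starRingEnd ℂ) q)]
    simp [map_sub, map_mul]
  rw [this]
  have hap := norm_nonneg p
  have haq := norm_nonneg q
  have d1 : 1 - (starRingEnd ℂ) p * q ≠ 0 := denom_ne (by nlinarith)
  rw [div_self (norm_ne_zero_iff.mpr d1), mul_one]

/-- A holomorphic self-map of the unit disc with two distinct zeros `ζ₁, ζ₂` satisfies
`|f 0| ≤ |ζ₁| * |ζ₂|`. -/
lemma two_zeros {f : ℂ → ℂ} {ζ₁ ζ₂ : ℂ} (hd : DifferentiableOn ℂ f (ball 0 1))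
    (hm : MapsTo f (ball 0 1) (ball 0 1)) (h1 : ‖ζ₁‖ < 1) (h2 : ‖ζ₂‖ < 1)
    (hne : ζ₁ ≠ ζ₂) (hf1 : f ζ₁ = 0) (hf2 : f ζ₂ = 0) :
    ‖f 0‖ ≤ ‖ζ₁‖ * ‖ζ₂‖ := by
  rcases eq_or_ne ζ₁ 0 with rfl | hζ₁0
  · simp [hf1]
  set F : ℂ → ℂ := f ∘ mob ζ₁ with hF
  have hFd : DifferentiableOn ℂ F (ball 0 1) := hd.comp (mob_diff h1) (mob_mapsTo h1)
  have hFm : MapsTo F (ball 0 1) (ball 0 1) := hm.comp (mob_mapsTo h1)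
  have hF0 : F 0 = 0 := by simp [hF, Function.comp, mob_zero, hf1]
  set w₂ : ℂ := mob ζ₁ ζ₂ with hw₂
  have hw₂lt : ‖w₂‖ < 1 := mob_abs_lt h1 h2
  have hFw₂ : F w₂ = 0 := by simp [hF, hw₂, Function.comp, mob_mob h1 h2, hf2]
  have hw₂0 : w₂ ≠ 0 := by
    intro h0
    apply hne
    have := mob_mob h1 h2
    rw [← hw₂, h0, mob_zero] at this
    exact this
  -- G = dslope F 0 is holomorphic with |G| ≤ 1
  set G : ℂ → ℂ := dslope F 0 with hG
  have hGd : DifferentiableOn ℂ G (ball 0 1) :=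
    (differentiableOn_dslope (isOpen_ball.mem_nhds (mem_ball_self one_pos))).mpr hFd
  have hGle : ∀ z ∈ ball (0 : ℂ) 1, ‖G z‖ ≤ 1 := by
    intro z hz
    have := Complex.norm_dslope_le_div_of_mapsTo_ball hFd (by rw [hF0]; exact hFm.mono_right ball_subset_closedBall) hz
    simpa using this
  have hGw₂ : G w₂ = 0 := by
    rw [hG, dslope_of_ne _ hw₂0]
    simp [slope_def_field, hFw₂, hF0]
  -- G maps the disc into itself (max principle)
  have hGm : MapsTo G (ball 0 1) (ball 0 1) := by
    intro z hz
    rw [mem_ball_zero_iff]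
    rcases lt_or_eq_of_le (hGle z hz) with h | h
    · exact h
    · exfalso
      have hmax : IsMaxOn (norm ∘ G) (ball 0 1) z :=
        fun y hy => by simpa [← h] using hGle y hy
      have := Complex.eqOn_of_isPreconnected_of_isMaxOn_norm
        (convex_ball (0:ℂ) 1).isPreconnected isOpen_ball hGd hz hmax
        (mem_ball_zero_iff.mpr (by assumption) : w₂ ∈ ball (0:ℂ) 1)
      rw [hGw₂, Function.const_apply] at this
      rw [← this] at h
      simp at h
  -- Schwarz–Pick at w₂ and ζ₁
  have hSP : ‖G ζ₁‖ ≤ ‖mob w₂ ζ₁‖ :=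
    schwarzPick hGd hGm hw₂lt h1 hGw₂
  have habs : ‖mob w₂ ζ₁‖ = ‖ζ₂‖ := abs_mob_mob_self h1 h2
  have hf0 : f 0 = ζ₁ * G ζ₁ := by
    have hFζ₁ : F ζ₁ = f 0 := by simp [hF, Function.comp, mob_self, ]
    rw [← hFζ₁, hG, dslope_of_ne _ hζ₁0, slope_def_field, hF0]
    field_simp
    ring
  rw [hf0, norm_mul]
  exact mul_le_mul_of_nonneg_left (habs ▸ hSP) (norm_nonneg ζ₁)

/-- Equality case in the Schwarz lemma: if a self-map of the disc fixing `0` attains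
`|f ζ| = |ζ|` at some `ζ ≠ 0`, then `|f z| = |z|` everywhere on the disc. -/
lemma schwarz_eq {f : ℂ → ℂ} {ζ : ℂ} (hd : DifferentiableOn ℂ f (ball 0 1))
    (hm : MapsTo f (ball 0 1) (ball 0 1)) (h0 : f 0 = 0) (hζ : ‖ζ‖ < 1) (hζ0 : ζ ≠ 0)
    (heq : ‖f ζ‖ = ‖ζ‖) :
    ∀ z ∈ ball (0 : ℂ) 1, ‖f z‖ = ‖z‖ := by
  have hmaps : MapsTo f (ball 0 1) (closedBall (f 0) 1) := by rw [h0]; exact hm.mono_right ball_subset_closedBall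
  have hζb : ζ ∈ ball (0 : ℂ) 1 := mem_ball_zero_iff.mpr (by assumption)
  have hds : ‖dslope f 0 ζ‖ = 1 / 1 := by
    rw [dslope_of_ne _ hζ0, slope_def_field, h0, sub_zero, sub_zero,
      norm_div, heq, div_self (norm_ne_zero_iff.mpr hζ0), one_div_one]
  have haff := Complex.affine_of_mapsTo_ball_of_exists_norm_dslope_eq_div hd hmaps hζb hds
  intro z hz
  have := haff hz
  simp only [h0, zero_add, sub_zero, smul_eq_mul] at this
  rw [this, norm_mul]
  have : ‖dslope f 0 ζ‖ = 1 := by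
    rw [hds, one_div_one]
  rw [this, mul_one]

/-- With `a, b ∈ D` distinct and nonzero and `z = (0, γ)`, `|ab| < |γ| < min |a| |b|`,
there is no analytic disc through `z` simultaneously attaining the infimum defining the
Lempert function `δ_{1,1}(z)` (poles `(a,0)`, `(b,0)` of weight `1`) and the one defining
`δ_{1,0}(z)` (single pole `(a,0)` of weight `1`). -/
theorem statement15 (a b γ : ℂ) (ha0 : a ≠ 0) (hb0 : b ≠ 0) (hab : a ≠ b)
    (ha1 : ‖a‖ < 1) (hb1 : ‖b‖ < 1)
    (hγ1 : ‖a * b‖ < ‖γ‖)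
    (hγ2 : ‖γ‖ < min (‖a‖) (‖b‖)) :
    ¬ ∃ f : ℂ → ℂ × ℂ, DifferentiableOn ℂ f (Metric.ball 0 1) ∧
        Set.MapsTo f (Metric.ball 0 1) bidisk ∧ f 0 = ((0 : ℂ), γ) ∧
        (∃ ζ₁ ζ₂ : ℂ, ζ₁ ∈ Metric.ball (0 : ℂ) 1 ∧ ζ₂ ∈ Metric.ball (0 : ℂ) 1 ∧
          f ζ₁ = (a, 0) ∧ f ζ₂ = (b, 0) ∧
          ((Real.log (‖ζ₁‖) + Real.log (‖ζ₂‖) : ℝ) : EReal) =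
            lempert bidisk 2 (fun j => if j = 0 then ((a, 0) : ℂ × ℂ) else (b, 0))
              (fun _ => 1) ((0 : ℂ), γ)) ∧
        (∃ ζ : ℂ, ζ ∈ Metric.ball (0 : ℂ) 1 ∧ f ζ = (a, 0) ∧
          ((Real.log (‖ζ‖) : ℝ) : EReal) =
            lempert bidisk 1 (fun _ => ((a, 0) : ℂ × ℂ)) (fun _ => 1) ((0 : ℂ), γ)) := by
  have hγa : ‖γ‖ < ‖a‖ := lt_of_lt_of_le hγ2 (min_le_left _ _)
  have hγ0 : (0 : ℝ) < ‖γ‖ := lt_of_le_of_lt (norm_nonneg _) hγ1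
  have ha0' : (0 : ℝ) < ‖a‖ := norm_pos_iff.mpr ha0
  rintro ⟨f, hfd, hfm, hf0, ⟨ζ₁, ζ₂, hζ₁, hζ₂, hfζ₁, hfζ₂, -⟩, ⟨ζ, hζmem, hfζ, hδ⟩⟩
  rw [mem_ball_zero_iff] at hζ₁ hζ₂ hζmem
  set f1 : ℂ → ℂ := fun z => (f z).1 with hf1def
  set f2 : ℂ → ℂ := fun z => (f z).2 with hf2def
  have hf1d : DifferentiableOn ℂ f1 (ball 0 1) := hfd.fst
  have hf2d : DifferentiableOn ℂ f2 (ball 0 1) := hfd.snd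
  have hf1m : MapsTo f1 (ball 0 1) (ball 0 1) := fun z hz =>
    mem_ball_zero_iff.mpr (by simpa using (hfm hz).1)
  have hf2m : MapsTo f2 (ball 0 1) (ball 0 1) := fun z hz =>
    mem_ball_zero_iff.mpr (by simpa using (hfm hz).2)
  have hf10 : f1 0 = 0 := by rw [hf1def]; simp [hf0]
  have hf20 : f2 0 = γ := by rw [hf2def]; simp [hf0]
  -- ζ ≠ 0
  have hζ0 : ζ ≠ 0 := by
    intro h; rw [h, hf0] at hfζ
    exact ha0 (congrArg Prod.fst hfζ).symm
  have hζpos : (0 : ℝ) < ‖ζ‖ := norm_pos_iff.mpr hζ0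
  -- upper bound for the one-pole Lempert function
  have hub : lempert bidisk 1 (fun _ => ((a, 0) : ℂ × ℂ)) (fun _ => 1) ((0 : ℂ), γ)
      ≤ ((Real.log (‖a‖) : ℝ) : EReal) := by
    unfold lempert
    apply sInf_le
    refine ⟨fun η => (η, γ / a * mob a η), ?_, ?_, ?_, fun _ => a, ?_, ?_⟩
    · exact differentiableOn_id.prodMk ((mob_diff ha1).const_mul (γ / a))
    · intro η hη
      rw [mem_ball_zero_iff] at hη
      have h1 : ‖γ / a‖ < 1 := by
        rw [norm_div, div_lt_one ha0']; exact hγa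
      have h2 : ‖mob a η‖ < 1 := mob_abs_lt ha1 hη
      constructor
      · simpa using hη
      · have := norm_nonneg (γ / a)
        have := norm_nonneg (mob a η)
        simp only [norm_mul]
        nlinarith
    · simp only [mob_zero]
      rw [Prod.ext_iff]
      constructor
      · rfl
      · show γ / a * a = γ
        field_simp
    · intro j _
      refine ⟨mem_ball_zero_iff.mpr (by assumption), ?_⟩
      simp [mob_self]
    · simp [Finset.sum_range_one]
  -- |ζ| ≤ |a|
  have hζa : ‖ζ‖ ≤ ‖a‖ := by
    rw [← hδ] at hub
    have : Real.log (‖ζ‖) ≤ Real.log (‖a‖) := by exact_mod_cast hub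
    exact (Real.log_le_log_iff hζpos ha0').mp this
  -- Schwarz: |a| ≤ |ζ|
  have hf1ζ : f1 ζ = a := by rw [hf1def]; simp [hfζ]
  have haζ : ‖a‖ ≤ ‖ζ‖ := by
    have := Complex.norm_le_norm_of_mapsTo_ball hf1d (hf1m.mono_right ball_subset_closedBall) hf10 (z := ζ) hζmem
    rwa [hf1ζ] at this
  have heq : ‖f1 ζ‖ = ‖ζ‖ := by
    rw [hf1ζ]; exact le_antisymm haζ hζa
  -- equality case: |f1 z| = |z| on the disc
  have hiso := schwarz_eq hf1d hf1m hf10 hζmem hζ0 heq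
  have hz1 : ‖ζ₁‖ = ‖a‖ := by
    have := hiso ζ₁ (mem_ball_zero_iff.mpr (by assumption))
    rw [hf1def] at this
    simp only [hfζ₁] at this
    exact this.symm
  have hz2 : ‖ζ₂‖ = ‖b‖ := by
    have := hiso ζ₂ (mem_ball_zero_iff.mpr (by assumption))
    rw [hf1def] at this
    simp only [hfζ₂] at this
    exact this.symm
  -- Jensen with the two zeros of f2
  have hne : ζ₁ ≠ ζ₂ := by
    intro h
    rw [h, hfζ₂] at hfζ₁
    exact hab (congrArg Prod.fst hfζ₁).symm
  have hf2ζ₁ : f2 ζ₁ = 0 := by rw [hf2def]; simp [hfζ₁]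
  have hf2ζ₂ : f2 ζ₂ = 0 := by rw [hf2def]; simp [hfζ₂]
  have hJ := two_zeros hf2d hf2m hζ₁ hζ₂ hne hf2ζ₁ hf2ζ₂
  rw [hf20, hz1, hz2, ← norm_mul] at hJ
  linarith
end
end

section
/- Let D×D be the bidisk in ℂ², let a, b ∈ D be distinct and nonzero, and let z = (0, γ) with |ab| < |γ| < min{|a|, |b|}. Then the Lempert function of D×D with poles (a,0) and (b,0), both of weight 1, satisfies δ(z) = log|γ|; moreover this value is attained by the holomorphic disc f(ζ) = (βζ, ((ζ − ζ₁)/(1 − ζ̄₁ζ))·((ζ − ζ₂)/(1 − ζ̄₂ζ))), where ζ₁ ∈ D satisfies ζ₁² = γa/b, ζ₂ = γ/ζ₁ and β = a/ζ₁. -/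
open Complex Metric Set Filter Topology

noncomputable section

variable {E : Type*} [NormedAddCommGroup E] [NormedSpace ℂ E]

lemma aux_normSq_ident (w z : ℂ) :
    Complex.normSq (1 - (starRingEnd ℂ w) * z) - Complex.normSq (z - w)
      = (1 - Complex.normSq w) * (1 - Complex.normSq z) := by
  simp [Complex.normSq_apply, Complex.mul_re, Complex.mul_im, Complex.sub_re, Complex.sub_im,
    Complex.one_re, Complex.one_im, Complex.conj_re, Complex.conj_im]
  ring

lemma aux_denom_ne (w z : ℂ) (hw : ‖w‖ < 1) (hz : ‖z‖ < 1) :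
    1 - (starRingEnd ℂ w) * z ≠ 0 := by
  intro h
  have h1 : ‖(starRingEnd ℂ w) * z‖ < 1 := by
    rw [norm_mul, Complex.norm_conj]
    calc ‖w‖ * ‖z‖ ≤ ‖z‖ := by
          nlinarith [norm_nonneg z, norm_nonneg w]
      _ < 1 := hz
  have h2 : (starRingEnd ℂ w) * z = 1 := by
    have := sub_eq_zero.mp h; exact this.symm
  rw [h2] at h1; simp at h1

lemma aux_blaschke_lt (w z : ℂ) (hw : ‖w‖ < 1) (hz : ‖z‖ < 1) :
    ‖(z - w) / (1 - (starRingEnd ℂ w) * z)‖ < 1 := by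
  have hd := aux_denom_ne w z hw hz
  rw [norm_div, div_lt_one (by
    have := norm_nonneg (1 - (starRingEnd ℂ w) * z)
    rcases this.lt_or_eq with h | h
    · exact h
    · exact absurd (norm_eq_zero.mp h.symm) hd)]
  have h1 : Complex.normSq w < 1 := by rw [← Complex.sq_norm] at *; nlinarith [norm_nonneg w]
  have h2 : Complex.normSq z < 1 := by rw [← Complex.sq_norm] at *; nlinarith [norm_nonneg z]
  have := aux_normSq_ident w z
  have hlt : Complex.normSq (z - w) < Complex.normSq (1 - (starRingEnd ℂ w) * z) := by nlinarith
  have := norm_nonneg (z - w)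
  rw [← Complex.sq_norm, ← Complex.sq_norm] at hlt
  nlinarith [norm_nonneg (1 - (starRingEnd ℂ w) * z)]


-- boundary estimate: on |z| = r, (r - |p|) * |1 - conj p * z| ≤ (1 - |p|*r) * |z - p|
lemma aux_boundary (p z : ℂ) (r : ℝ) (hpr : ‖p‖ < r) (hr1 : r ≤ 1)
    (hz : ‖z‖ = r) :
    (r - ‖p‖) * ‖1 - (starRingEnd ℂ p) * z‖
      ≤ (1 - ‖p‖ * r) * ‖z - p‖ := by
  set m := ‖p‖ with hm
  have hm0 : 0 ≤ m := norm_nonneg p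
  have hmr : m * r < 1 := by nlinarith
  have hT : ((starRingEnd ℂ p) * z).re ≤ m * r := by
    calc ((starRingEnd ℂ p) * z).re ≤ ‖(starRingEnd ℂ p) * z‖ := Complex.re_le_norm _
      _ = m * r := by rw [norm_mul, Complex.norm_conj, hz]
  have hsq : ((r - m) * ‖1 - (starRingEnd ℂ p) * z‖)^2
      ≤ ((1 - m * r) * ‖z - p‖)^2 := by
    have e1 : (‖1 - (starRingEnd ℂ p) * z‖)^2 = Complex.normSq (1 - (starRingEnd ℂ p) * z) := Complex.sq_norm _
    have e2 : (‖z - p‖)^2 = Complex.normSq (z - p) := Complex.sq_norm _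
    have n1 : Complex.normSq (1 - (starRingEnd ℂ p) * z)
        = 1 - 2 * ((starRingEnd ℂ p) * z).re + m^2 * r^2 := by
      have hzz : z.re^2 + z.im^2 = r^2 := by
        rw [← hz, Complex.sq_norm, Complex.normSq_apply]; ring
      have hpp : p.re^2 + p.im^2 = m^2 := by
        rw [hm, Complex.sq_norm, Complex.normSq_apply]; ring
      simp [Complex.normSq_apply, Complex.mul_re, Complex.mul_im, Complex.sub_re, Complex.sub_im,
        Complex.one_re, Complex.one_im, Complex.conj_re, Complex.conj_im]
      nlinarith [hzz, hpp]
    have n2 : Complex.normSq (z - p) = r^2 - 2 * ((starRingEnd ℂ p) * z).re + m^2 := by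
      have hzz : z.re^2 + z.im^2 = r^2 := by
        rw [← hz, Complex.sq_norm, Complex.normSq_apply]; ring
      have hpp : p.re^2 + p.im^2 = m^2 := by
        rw [hm, Complex.sq_norm, Complex.normSq_apply]; ring
      simp [Complex.normSq_apply, Complex.mul_re, Complex.mul_im, Complex.sub_re, Complex.sub_im,
        Complex.conj_re, Complex.conj_im]
      nlinarith [hzz, hpp]
    rw [mul_pow, mul_pow, e1, e2, n1, n2]
    set T := ((starRingEnd ℂ p) * z).re
    have hr0 : 0 ≤ r := hm0.trans hpr.le
    have h1 : (0:ℝ) ≤ 1 - r^2 := by nlinarith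
    have h2 : (0:ℝ) ≤ 1 - m^2 := by nlinarith
    nlinarith [mul_nonneg (mul_nonneg (sub_nonneg.2 hT) h1) h2]
  have h1 : 0 ≤ (1 - m * r) * ‖z - p‖ :=
    mul_nonneg (by linarith) (norm_nonneg _)
  exact le_of_pow_le_pow_left₀ two_ne_zero h1 hsq

lemma aux_divide (g : ℂ → ℂ) (p : ℂ) (hp : ‖p‖ < 1)
    (hg : DifferentiableOn ℂ g (ball 0 1))
    (hb : ∀ z ∈ ball (0:ℂ) 1, ‖g z‖ ≤ 1) (hgp : g p = 0) :
    DifferentiableOn ℂ (fun z => dslope g p z * (1 - (starRingEnd ℂ p) * z)) (ball 0 1) ∧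
      ∀ z ∈ ball (0:ℂ) 1, ‖dslope g p z * (1 - (starRingEnd ℂ p) * z)‖ ≤ 1 := by
  have hpmem : p ∈ ball (0:ℂ) 1 := by
    rw [mem_ball_zero_iff]; exact hp
  have hds : DifferentiableOn ℂ (dslope g p) (ball 0 1) :=
    (Complex.differentiableOn_dslope (isOpen_ball.mem_nhds hpmem)).2 hg
  have hdiff : DifferentiableOn ℂ (fun z => dslope g p z * (1 - (starRingEnd ℂ p) * z)) (ball 0 1) :=
    hds.mul ((differentiableOn_const _).sub ((differentiableOn_const _).mul differentiableOn_id))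
  refine ⟨hdiff, fun w hw => ?_⟩
  set m := ‖p‖ with hm
  have hm0 : 0 ≤ m := norm_nonneg p
  set h : ℂ → ℂ := fun z => dslope g p z * (1 - (starRingEnd ℂ p) * z) with hh
  have hw1 : ‖w‖ < 1 := mem_ball_zero_iff.1 hw
  -- for each r in (max m |w|, 1), bound ‖h w‖
  have key : ∀ r ∈ Ioo (max m (‖w‖)) 1, ‖h w‖ ≤ (1 - m * r) / (r - m) := by
    intro r hr
    obtain ⟨hrl, hru⟩ := hr
    have hmr : m < r := lt_of_le_of_lt (le_max_left _ _) hrl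
    have hwr : ‖w‖ < r := lt_of_le_of_lt (le_max_right _ _) hrl
    have hr0 : 0 < r := lt_of_le_of_lt hm0 hmr
    have hsub : closedBall (0:ℂ) r ⊆ ball 0 1 := closedBall_subset_ball hru
    have hdc : DiffContOnCl ℂ h (ball 0 r) := by
      have : DifferentiableOn ℂ h (closure (ball (0:ℂ) r)) := by
        rw [closure_ball _ hr0.ne']
        exact hdiff.mono hsub
      exact this.diffContOnCl
    have hbound : ∀ z ∈ frontier (ball (0:ℂ) r), ‖h z‖ ≤ (1 - m * r) / (r - m) := by
      intro z hz
      rw [frontier_ball _ hr0.ne'] at hz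
      have hzr : ‖z‖ = r := by
        simpa using mem_sphere_zero_iff_norm.1 hz
      have hzp : z ≠ p := by
        intro h'; rw [h'] at hzr; exact (ne_of_lt hmr) hzr
      have hz1 : z ∈ ball (0:ℂ) 1 := by rw [mem_ball_zero_iff]; rw [← hzr] at hru; exact hru
      have hzpne : z - p ≠ 0 := sub_ne_zero.2 hzp
      have hval : h z = g z / (z - p) * (1 - (starRingEnd ℂ p) * z) := by
        rw [hh]; simp only
        rw [dslope_of_ne _ hzp, slope_def_field, hgp, sub_zero]
      rw [hval, norm_mul, norm_div]
      have hab := aux_boundary p z r hmr hru.le hzr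
      have hgz := hb z hz1
      have habs : 0 < ‖z - p‖ := by
        simpa [norm_pos_iff] using hzpne
      rw [div_mul_eq_mul_div, div_le_div_iff₀ habs (by linarith : (0:ℝ) < r - m)]
      calc ‖g z‖ * ‖1 - (starRingEnd ℂ p) * z‖ * (r - m)
          ≤ 1 * (‖1 - (starRingEnd ℂ p) * z‖ * (r - m)) := by
            rw [mul_assoc]
            exact mul_le_mul_of_nonneg_right hgz
              (mul_nonneg (norm_nonneg _) (by linarith))
        _ = (r - m) * ‖1 - (starRingEnd ℂ p) * z‖ := by ring
        _ ≤ (1 - m * r) * ‖z - p‖ := hab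
    have hwcl : w ∈ closure (ball (0:ℂ) r) := by
      rw [closure_ball _ hr0.ne', mem_closedBall_zero_iff]
      exact hwr.le
    have := Complex.norm_le_of_forall_mem_frontier_norm_le isBounded_ball hdc hbound hwcl
    simpa using this
  -- take limits r → 1⁻
  have hm1 : (1:ℝ) - m ≠ 0 := by
    have : m < 1 := hp
    linarith
  have htend : Tendsto (fun r : ℝ => (1 - m * r) / (r - m)) (𝓝[<] (1:ℝ)) (𝓝 1) := by
    have hc : ContinuousAt (fun r : ℝ => (1 - m * r) / (r - m)) 1 := by
      apply ContinuousAt.div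
      · fun_prop
      · fun_prop
      · intro h
        exact hm1 (by linarith [sub_eq_zero.1 h])
    have h2 : Tendsto (fun r : ℝ => (1 - m * r) / (r - m)) (𝓝 1)
        (𝓝 ((1 - m * 1) / ((1:ℝ) - m))) := hc.tendsto
    rw [show (1 - m * 1) / ((1:ℝ) - m) = 1 by field_simp] at h2
    exact h2.mono_left nhdsWithin_le_nhds
  have hev : ∀ᶠ r in 𝓝[<] (1:ℝ), ‖h w‖ ≤ (1 - m * r) / (r - m) := by
    have hmem : Ioo (max m (‖w‖)) 1 ∈ 𝓝[<] (1:ℝ) :=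
      Ioo_mem_nhdsLT_of_mem ⟨max_lt hp hw1, le_refl 1⟩
    filter_upwards [hmem] with r hr using key r hr
  exact ge_of_tendsto htend hev

lemma aux_jensen2 (g : ℂ → ℂ) (p q : ℂ) (hp : ‖p‖ < 1) (hq : ‖q‖ < 1)
    (hpq : p ≠ q) (hg : DifferentiableOn ℂ g (ball 0 1))
    (hb : ∀ z ∈ ball (0:ℂ) 1, ‖g z‖ ≤ 1) (hgp : g p = 0) (hgq : g q = 0) :
    ‖g 0‖ ≤ ‖p‖ * ‖q‖ := by
  rcases eq_or_ne p 0 with rfl | hp0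
  · rw [hgp]; simp [mul_nonneg (norm_nonneg _) (norm_nonneg _)]
  rcases eq_or_ne q 0 with rfl | hq0
  · rw [hgq]; simp [mul_nonneg (norm_nonneg _) (norm_nonneg _)]
  obtain ⟨h1diff, h1b⟩ := aux_divide g p hp hg hb hgp
  set h₁ : ℂ → ℂ := fun z => dslope g p z * (1 - (starRingEnd ℂ p) * z) with hh1
  have h1q : h₁ q = 0 := by
    rw [hh1]; simp only
    rw [dslope_of_ne _ (Ne.symm hpq), slope_def_field, hgp, hgq, sub_zero, zero_div, zero_mul]
  obtain ⟨h2diff, h2b⟩ := aux_divide h₁ q hq h1diff h1b h1q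
  have h20 := h2b 0 (by simp)
  have e1 : h₁ 0 = g 0 / (-p) := by
    rw [hh1]; simp only
    rw [dslope_of_ne _ (Ne.symm hp0), slope_def_field, hgp, sub_zero, zero_sub, mul_zero, sub_zero,
      mul_one]
  have e2 : dslope h₁ q 0 * (1 - (starRingEnd ℂ q) * 0) = h₁ 0 / (-q) := by
    rw [dslope_of_ne _ (Ne.symm hq0), slope_def_field, h1q, sub_zero, zero_sub, mul_zero, sub_zero,
      mul_one]
  rw [e2, e1] at h20
  rw [norm_div, norm_div, norm_neg, norm_neg, div_div] at h20
  have hpqpos : 0 < ‖p‖ * ‖q‖ := by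
    have := norm_pos_iff.mpr hp0
    have := norm_pos_iff.mpr hq0
    positivity
  exact (div_le_one hpqpos).1 h20

set_option maxHeartbeats 2000000 in
/-- With `a, b ∈ D` distinct and nonzero and `z = (0, γ)`, `|ab| < |γ| < min |a| |b|`,
the Lempert function of the bidisk with poles `(a,0)`, `(b,0)` of weight `1` satisfies
`δ(z) = log |γ|`, and the value is attained by the analytic disc
`f(ζ) = (βζ, ((ζ-ζ₁)/(1-ζ̄₁ζ))·((ζ-ζ₂)/(1-ζ̄₂ζ)))` with `ζ₁² = γa/b`, `ζ₂ = γ/ζ₁`,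
`β = a/ζ₁`. -/
theorem statement16 (a b γ : ℂ) (ha0 : a ≠ 0) (hb0 : b ≠ 0) (hab : a ≠ b)
    (ha1 : ‖a‖ < 1) (hb1 : ‖b‖ < 1)
    (hγ1 : ‖a * b‖ < ‖γ‖)
    (hγ2 : ‖γ‖ < min (‖a‖) (‖b‖))
    (ζ₁ : ℂ) (hζ₁ : ζ₁ ^ 2 = γ * a / b) :
    lempert bidisk 2 (fun j => if j = 0 then ((a, 0) : ℂ × ℂ) else (b, 0)) (fun _ => 1)
        ((0 : ℂ), γ) = ((Real.log (‖γ‖) : ℝ) : EReal) ∧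
      DifferentiableOn ℂ
        (fun ζ => ((a / ζ₁ * ζ,
          (ζ - ζ₁) / (1 - (starRingEnd ℂ ζ₁) * ζ) *
            ((ζ - γ / ζ₁) / (1 - (starRingEnd ℂ (γ / ζ₁)) * ζ))) : ℂ × ℂ))
        (Metric.ball 0 1) ∧
      Set.MapsTo
        (fun ζ => ((a / ζ₁ * ζ,
          (ζ - ζ₁) / (1 - (starRingEnd ℂ ζ₁) * ζ) *
            ((ζ - γ / ζ₁) / (1 - (starRingEnd ℂ (γ / ζ₁)) * ζ))) : ℂ × ℂ))
        (Metric.ball 0 1) bidisk ∧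
      ζ₁ ∈ Metric.ball (0 : ℂ) 1 ∧ γ / ζ₁ ∈ Metric.ball (0 : ℂ) 1 ∧
      (fun ζ => ((a / ζ₁ * ζ,
          (ζ - ζ₁) / (1 - (starRingEnd ℂ ζ₁) * ζ) *
            ((ζ - γ / ζ₁) / (1 - (starRingEnd ℂ (γ / ζ₁)) * ζ))) : ℂ × ℂ)) 0
        = ((0 : ℂ), γ) ∧
      (fun ζ => ((a / ζ₁ * ζ,
          (ζ - ζ₁) / (1 - (starRingEnd ℂ ζ₁) * ζ) *
            ((ζ - γ / ζ₁) / (1 - (starRingEnd ℂ (γ / ζ₁)) * ζ))) : ℂ × ℂ)) ζ₁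
        = ((a, 0) : ℂ × ℂ) ∧
      (fun ζ => ((a / ζ₁ * ζ,
          (ζ - ζ₁) / (1 - (starRingEnd ℂ ζ₁) * ζ) *
            ((ζ - γ / ζ₁) / (1 - (starRingEnd ℂ (γ / ζ₁)) * ζ))) : ℂ × ℂ)) (γ / ζ₁)
        = ((b, 0) : ℂ × ℂ) ∧
      Real.log (‖ζ₁‖) + Real.log (‖γ / ζ₁‖) =
        Real.log (‖γ‖) := by
  -- basic scalar facts
  have hA : 0 < ‖a‖ := norm_pos_iff.mpr ha0
  have hB : 0 < ‖b‖ := norm_pos_iff.mpr hb0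
  have hG0 : 0 < ‖γ‖ := lt_trans (norm_pos_iff.mpr (mul_ne_zero ha0 hb0)) hγ1
  have hγ0 : γ ≠ 0 := by
    intro h; rw [h] at hG0; simp at hG0
  have hζ₁0 : ζ₁ ≠ 0 := by
    intro h
    rw [h] at hζ₁
    have : γ * a / b = 0 := by rw [← hζ₁]; ring
    rcases div_eq_zero_iff.1 this with h' | h'
    · rcases mul_eq_zero.1 h' with h'' | h'' <;> [exact hγ0 h''; exact ha0 h'']
    · exact hb0 h'
  have hGA : ‖γ‖ < ‖a‖ := lt_of_lt_of_le hγ2 (min_le_left _ _)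
  have hGB : ‖γ‖ < ‖b‖ := lt_of_lt_of_le hγ2 (min_le_right _ _)
  have hABG : ‖a‖ * ‖b‖ < ‖γ‖ := by rwa [norm_mul] at hγ1
  have hZsq : (‖ζ₁‖)^2 = ‖γ‖ * ‖a‖ / ‖b‖ := by
    rw [← norm_pow, hζ₁, norm_div, norm_mul]
  have hZ0 : 0 < ‖ζ₁‖ := norm_pos_iff.mpr hζ₁0
  have hZsqB : (‖ζ₁‖)^2 * ‖b‖ = ‖γ‖ * ‖a‖ := by
    rw [hZsq]; field_simp
  have hAZ : ‖a‖ < ‖ζ₁‖ := by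
    have h1 : ‖a‖ ^ 2 * ‖b‖ < ‖γ‖ * ‖a‖ := by nlinarith
    have h2 : ‖a‖ ^ 2 < ‖ζ₁‖ ^ 2 := by nlinarith
    nlinarith
  have hZ1 : ‖ζ₁‖ < 1 := by
    have h1 : ‖ζ₁‖ ^ 2 < ‖a‖ := by nlinarith
    nlinarith
  have hGZ : ‖γ‖ < ‖ζ₁‖ := by
    have h1 : ‖γ‖ * ‖b‖ < ‖a‖ := by nlinarith
    have h2 : ‖γ‖ ^ 2 * ‖b‖ < ‖ζ₁‖ ^ 2 * ‖b‖ := by nlinarith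
    have h3 : ‖γ‖ ^ 2 < ‖ζ₁‖ ^ 2 := by nlinarith
    nlinarith
  have hW1 : ‖γ / ζ₁‖ < 1 := by
    rw [norm_div, div_lt_one hZ0]; exact hGZ
  have hz1mem : ζ₁ ∈ ball (0:ℂ) 1 := by rw [mem_ball_zero_iff]; exact hZ1
  have hz2mem : γ / ζ₁ ∈ ball (0:ℂ) 1 := by rw [mem_ball_zero_iff]; exact hW1
  set F : ℂ → ℂ × ℂ := fun ζ => ((a / ζ₁ * ζ,
          (ζ - ζ₁) / (1 - (starRingEnd ℂ ζ₁) * ζ) *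
            ((ζ - γ / ζ₁) / (1 - (starRingEnd ℂ (γ / ζ₁)) * ζ))) : ℂ × ℂ) with hF
  -- differentiability
  have hdiff : DifferentiableOn ℂ F (ball 0 1) := by
    apply DifferentiableOn.prodMk
    · exact ((differentiable_id.const_mul _).differentiableOn)
    · apply DifferentiableOn.mul
      · apply DifferentiableOn.div
        · exact (differentiable_id.sub_const _).differentiableOn
        · exact ((differentiable_const _).sub (differentiable_id.const_mul _)).differentiableOn
        · intro z hz
          exact aux_denom_ne _ _ hZ1 (mem_ball_zero_iff.1 hz)
      · apply DifferentiableOn.div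
        · exact (differentiable_id.sub_const _).differentiableOn
        · exact ((differentiable_const _).sub (differentiable_id.const_mul _)).differentiableOn
        · intro z hz
          exact aux_denom_ne _ _ hW1 (mem_ball_zero_iff.1 hz)
  -- maps to bidisk
  have hmaps : Set.MapsTo F (ball 0 1) bidisk := by
    intro z hz
    have hz1 : ‖z‖ < 1 := mem_ball_zero_iff.1 hz
    constructor
    · show ‖a / ζ₁ * z‖ < 1
      rw [norm_mul, norm_div]
      have h1 : ‖a‖ / ‖ζ₁‖ < 1 := (div_lt_one hZ0).2 hAZ
      nlinarith [norm_nonneg z, div_nonneg hA.le hZ0.le]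
    · show ‖_ * _‖ < 1
      rw [norm_mul]
      have h1 := aux_blaschke_lt ζ₁ z hZ1 hz1
      have h2 := aux_blaschke_lt (γ / ζ₁) z hW1 hz1
      nlinarith [norm_nonneg ((z - ζ₁) / (1 - (starRingEnd ℂ ζ₁) * z)),
        norm_nonneg ((z - γ/ζ₁) / (1 - (starRingEnd ℂ (γ/ζ₁)) * z))]
  -- evaluations
  have hF0 : F 0 = ((0:ℂ), γ) := by
    rw [hF]
    simp only [mul_zero, zero_sub, sub_zero, div_one]
    rw [Prod.mk.injEq]
    constructor
    · ring
    · field_simp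
  have hFz1 : F ζ₁ = ((a, 0) : ℂ × ℂ) := by
    rw [hF]
    simp only [sub_self, zero_div, zero_mul]
    rw [Prod.mk.injEq]
    constructor
    · field_simp
    · rfl
  have hFz2 : F (γ / ζ₁) = ((b, 0) : ℂ × ℂ) := by
    rw [hF]
    simp only [sub_self, zero_div, mul_zero]
    rw [Prod.mk.injEq]
    refine ⟨?_, rfl⟩
    have hb' : (ζ₁:ℂ)^2 * b = γ * a := by
      rw [hζ₁]; field_simp
    field_simp
    linear_combination -hb'
  have hlogs : Real.log (‖ζ₁‖) + Real.log (‖γ / ζ₁‖) =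
      Real.log (‖γ‖) := by
    rw [← Real.log_mul (ne_of_gt hZ0) (ne_of_gt (norm_pos_iff.mpr (div_ne_zero hγ0 hζ₁0)))]
    congr 1
    rw [← norm_mul]
    congr 1
    field_simp
  -- the Lempert function value
  have hval : lempert bidisk 2 (fun j => if j = 0 then ((a, 0) : ℂ × ℂ) else (b, 0)) (fun _ => 1)
      ((0 : ℂ), γ) = ((Real.log (‖γ‖) : ℝ) : EReal) := by
    apply le_antisymm
    · apply sInf_le
      refine ⟨F, hdiff, hmaps, hF0, fun j => if j = 0 then ζ₁ else γ / ζ₁, ?_, ?_⟩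
      · intro j hj
        interval_cases j
        · exact ⟨hz1mem, hFz1⟩
        · exact ⟨hz2mem, hFz2⟩
      · rw [Finset.sum_range_succ, Finset.sum_range_one]
        norm_num
        refine EReal.coe_eq_coe_iff.2 ?_
        show Real.log (‖γ‖) =
          Real.log (‖ζ₁‖) + Real.log (‖γ‖ / ‖ζ₁‖)
        rw [← norm_div]
        exact hlogs.symm
    · apply le_sInf
      rintro d ⟨f, hf, hm, hf0, ζ, hζ, rfl⟩
      obtain ⟨hζ0mem, hζ0val⟩ := hζ 0 (by norm_num)
      obtain ⟨hζ1mem, hζ1val⟩ := hζ 1 (by norm_num)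
      norm_num at hζ0val hζ1val
      set g : ℂ → ℂ := fun z => (f z).2 with hg
      have hgd : DifferentiableOn ℂ g (ball 0 1) := hf.snd
      have hgb : ∀ z ∈ ball (0:ℂ) 1, ‖g z‖ ≤ 1 := fun z hz => (hm hz).2.le
      have hgp : g (ζ 0) = 0 := by rw [hg]; simp only; rw [hζ0val]
      have hgq : g (ζ 1) = 0 := by rw [hg]; simp only; rw [hζ1val]
      have hg0 : g 0 = γ := by rw [hg]; simp only; rw [hf0]
      have hpq : ζ 0 ≠ ζ 1 := by
        intro h
        rw [h, hζ1val] at hζ0val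
        exact hab (congrArg Prod.fst hζ0val).symm
      have hjen := aux_jensen2 g (ζ 0) (ζ 1) (mem_ball_zero_iff.1 hζ0mem)
        (mem_ball_zero_iff.1 hζ1mem) hpq hgd hgb hgp hgq
      rw [hg0] at hjen
      have hp0 : ζ 0 ≠ 0 := by
        intro h; rw [h, hg0] at hgp; exact hγ0 hgp
      have hq0 : ζ 1 ≠ 0 := by
        intro h; rw [h, hg0] at hgq; exact hγ0 hgq
      have hlog : Real.log (‖γ‖) ≤
          Real.log (‖ζ 0‖) + Real.log (‖ζ 1‖) := by
        rw [← Real.log_mul (by simpa using hp0) (by simpa using hq0)]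
        exact (Real.log_le_log_iff hG0 (mul_pos (norm_pos_iff.mpr hp0) (norm_pos_iff.mpr hq0))).2 hjen
      rw [Finset.sum_range_succ, Finset.sum_range_one]
      norm_num
      exact EReal.coe_le_coe_iff.2 hlog
  exact ⟨hval, hdiff, hmaps, hz1mem, hz2mem, hF0, hFz1, hFz2, hlogs⟩
end
end

section
/- Let D×D be the bidisk in ℂ², let a ∈ D be nonzero, and let z = (0, γ) with 0 < |γ| < |a|. Then the Lempert function of D×D with the single pole (a,0) of weight 1 satisfies δ(z) = log|a|; and a holomorphic disc f = (f₁, f₂): D → D×D with f(0) = z and f(ζ₁) = (a,0) for some ζ₁ ∈ D attains this infimum (i.e. log|ζ₁| = log|a|) if and only if f₁ is a rotation, i.e. f₁(ζ) = αζ for some α ∈ ℂ with |α| = 1. -/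
open Complex Metric Set Filter Topology

noncomputable section

variable {E : Type*} [NormedAddCommGroup E] [NormedSpace ℂ E]

/-- The basic inequality for the Blaschke factor: `|a - ζ| ≤ |1 - ā ζ|` when `|a|, |ζ| < 1`. -/
lemma blaschke_le {a ζ : ℂ} (ha : ‖a‖ < 1) (hζ : ‖ζ‖ < 1) :
    ‖a - ζ‖ ≤ ‖1 - (starRingEnd ℂ) a * ζ‖ := by
  have key : Complex.normSq (1 - (starRingEnd ℂ) a * ζ) - Complex.normSq (a - ζ)
      = (1 - Complex.normSq a) * (1 - Complex.normSq ζ) := by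
    have h1 := Complex.mul_conj (1 - (starRingEnd ℂ) a * ζ)
    have h2 := Complex.mul_conj (a - ζ)
    have h3 := Complex.mul_conj a
    have h4 := Complex.mul_conj ζ
    have : ((Complex.normSq (1 - (starRingEnd ℂ) a * ζ) : ℂ)) - Complex.normSq (a - ζ)
        = (1 - (Complex.normSq a : ℂ)) * (1 - Complex.normSq ζ) := by
      rw [← h1, ← h2, ← h3, ← h4]
      simp only [map_sub, map_mul, map_one, Complex.conj_conj]
      ring
    exact_mod_cast this
  have h5 : 0 ≤ (1 - Complex.normSq a) * (1 - Complex.normSq ζ) := by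
    have ha' : Complex.normSq a < 1 := by
      rw [← Complex.sq_norm]; nlinarith [norm_nonneg a]
    have hζ' : Complex.normSq ζ < 1 := by
      rw [← Complex.sq_norm]; nlinarith [norm_nonneg ζ]
    nlinarith
  have h6 : Complex.normSq (a - ζ) ≤ Complex.normSq (1 - (starRingEnd ℂ) a * ζ) := by linarith
  simpa [Complex.norm_def] using Real.sqrt_le_sqrt h6

set_option maxHeartbeats 1000000 in
/-- Schwarz lemma for the first component of an analytic disc in the bidisk. -/
lemma fst_schwarz {f : ℂ → ℂ × ℂ} (hd : DifferentiableOn ℂ f (Metric.ball (0:ℂ) 1))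
    (hm : Set.MapsTo f (Metric.ball (0:ℂ) 1) bidisk) (h0 : (f 0).1 = 0) {z : ℂ}
    (hz : ‖z‖ < 1) : ‖(f z).1‖ ≤ ‖z‖ := by
  set g : ℂ → ℂ := fun ζ => (f ζ).1 with hg
  have hgm : Set.MapsTo g (Metric.ball (0:ℂ) 1) (Metric.ball (0:ℂ) 1) := by
    intro ζ hζ
    have := hm hζ
    rw [bidisk, Set.mem_setOf_eq] at this
    exact mem_ball_zero_iff.2 this.1
  have hdf : DifferentiableOn ℂ g (Metric.ball (0:ℂ) 1) := hd.fst
  have h0' : g 0 = 0 := h0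
  exact Complex.norm_le_norm_of_mapsTo_ball hdf (hgm.mono_right ball_subset_closedBall) h0' hz

set_option maxHeartbeats 1000000 in
/-- Equality case of the Schwarz lemma: if `|f₁(ζ₁)| = |ζ₁|` at some nonzero `ζ₁`,
then the first component of `f` is a rotation. -/
lemma fst_rotation {f : ℂ → ℂ × ℂ} (hd : DifferentiableOn ℂ f (Metric.ball (0:ℂ) 1))
    (hm : Set.MapsTo f (Metric.ball (0:ℂ) 1) bidisk) (h0 : (f 0).1 = 0) {ζ₁ : ℂ}
    (hζ₁ : ζ₁ ∈ Metric.ball (0 : ℂ) 1) (hne : ζ₁ ≠ 0)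
    (heq : ‖(f ζ₁).1‖ = ‖ζ₁‖) :
    ∃ α : ℂ, ‖α‖ = 1 ∧ ∀ ζ ∈ Metric.ball (0 : ℂ) 1, (f ζ).1 = α * ζ := by
  set g : ℂ → ℂ := fun ζ => (f ζ).1 with hg
  have hgd : DifferentiableOn ℂ g (Metric.ball (0:ℂ) 1) := hd.fst
  have hgm : Set.MapsTo g (Metric.ball (0:ℂ) 1) (Metric.ball (g 0) 1) := by
    rw [show g 0 = 0 from h0]
    intro ζ hζ
    have := hm hζ
    rw [bidisk, Set.mem_setOf_eq] at this
    exact mem_ball_zero_iff.2 this.1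
  have hds : ‖dslope g 0 ζ₁‖ = 1 / 1 := by
    rw [dslope_of_ne _ hne, slope_def_field]
    rw [show g 0 = 0 from h0]
    simp only [sub_zero]
    rw [norm_div]
    rw [show ‖g ζ₁‖ = ‖ζ₁‖ from heq]
    rw [div_self (by simpa using hne), one_div_one]
  have haff := Complex.affine_of_mapsTo_ball_of_exists_norm_dslope_eq_div hgd (hgm.mono_right ball_subset_closedBall) hζ₁ hds
  refine ⟨dslope g 0 ζ₁, by simpa using hds, fun ζ hζ => ?_⟩
  have := haff hζ
  simp only [show g 0 = 0 from h0, sub_zero, zero_add, smul_eq_mul] at this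
  rw [show (f ζ).1 = g ζ from rfl, this, mul_comm]

/-- With `a ∈ D` nonzero and `z = (0, γ)`, `0 < |γ| < |a|`, the Lempert function of the
bidisk with single pole `(a, 0)` of weight `1` satisfies `δ(z) = log |a|`; moreover an
analytic disc `f : D → D × D` with `f(0) = z` and `f(ζ₁) = (a, 0)` attains this infimum
(i.e. `log|ζ₁| = log|a|`) if and only if its first component is a rotation. -/
theorem statement17 (a γ : ℂ) (ha0 : a ≠ 0) (ha1 : ‖a‖ < 1)
    (hγ0 : 0 < ‖γ‖) (hγa : ‖γ‖ < ‖a‖) :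
    lempert bidisk 1 (fun _ => ((a, 0) : ℂ × ℂ)) (fun _ => 1) ((0 : ℂ), γ) =
        ((Real.log (‖a‖) : ℝ) : EReal) ∧
      ∀ f : ℂ → ℂ × ℂ, DifferentiableOn ℂ f (Metric.ball 0 1) →
        Set.MapsTo f (Metric.ball 0 1) bidisk → f 0 = ((0 : ℂ), γ) →
        ∀ ζ₁ ∈ Metric.ball (0 : ℂ) 1, f ζ₁ = (a, 0) →
          (Real.log (‖ζ₁‖) = Real.log (‖a‖) ↔
            ∃ α : ℂ, ‖α‖ = 1 ∧
              ∀ ζ ∈ Metric.ball (0 : ℂ) 1, (f ζ).1 = α * ζ) := by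
  have ha : 0 < ‖a‖ := norm_pos_iff.mpr ha0
  constructor
  · apply le_antisymm
    · apply sInf_le
      have hden : ∀ ζ : ℂ, ζ ∈ Metric.ball (0:ℂ) 1 → (1 - (starRingEnd ℂ) a * ζ) ≠ 0 := by
        intro ζ hζ
        have hζ1 : ‖ζ‖ < 1 := by simpa using mem_ball_zero_iff.1 hζ
        have h2 : ‖(starRingEnd ℂ) a * ζ‖ < 1 := by
          rw [norm_mul, Complex.norm_conj]
          nlinarith [norm_nonneg a, norm_nonneg ζ]
        intro h
        rw [sub_eq_zero] at h
        rw [← h] at h2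
        simp at h2
      refine ⟨fun ζ => (ζ, (γ / a) * ((a - ζ) / (1 - (starRingEnd ℂ) a * ζ))), ?_, ?_, ?_,
        fun _ => a, ?_, ?_⟩
      · apply DifferentiableOn.prodMk differentiableOn_id
        exact (differentiableOn_const _).mul
          (((differentiableOn_const a).sub differentiableOn_id).div
            (((differentiableOn_const 1).sub
              ((differentiableOn_const _).mul differentiableOn_id))) hden)
      · intro ζ hζ
        have hζ1 : ‖ζ‖ < 1 := by simpa using mem_ball_zero_iff.1 hζ
        rw [bidisk, Set.mem_setOf_eq]
        refine ⟨hζ1, ?_⟩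
        have hq : ‖(a - ζ) / (1 - (starRingEnd ℂ) a * ζ)‖ ≤ 1 := by
          rw [norm_div]
          exact div_le_one_of_le₀ (blaschke_le ha1 hζ1) (norm_nonneg _)
        have hγa' : ‖γ / a‖ < 1 := by
          rw [norm_div]
          exact (div_lt_one ha).2 hγa
        calc ‖(γ / a) * ((a - ζ) / (1 - (starRingEnd ℂ) a * ζ))‖
            = ‖γ / a‖ * ‖(a - ζ) / (1 - (starRingEnd ℂ) a * ζ)‖ := by
              rw [norm_mul]
          _ ≤ ‖γ / a‖ * 1 := by
              exact mul_le_mul_of_nonneg_left hq (norm_nonneg _)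
          _ < 1 := by rwa [mul_one]
      · show ((0:ℂ), (γ / a) * ((a - 0) / (1 - (starRingEnd ℂ) a * 0))) = ((0:ℂ), γ)
        have heq2 : (γ / a) * ((a - 0) / (1 - (starRingEnd ℂ) a * 0)) = γ := by
          rw [sub_zero, mul_zero, sub_zero, div_one, div_mul_cancel₀ γ ha0]
        rw [heq2]
      · intro j hj
        refine ⟨mem_ball_zero_iff.2 ha1, ?_⟩
        rw [Prod.ext_iff]
        exact ⟨rfl, by simp⟩
      · simp [Finset.sum_range_one]
    · apply le_sInf
      rintro d ⟨f, hdiff, hmaps, hf0, ζ, hζ, rfl⟩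
      obtain ⟨hζb, hfζ⟩ := hζ 0 (by norm_num)
      have h1 : ‖a‖ ≤ ‖ζ 0‖ := by
        have := fst_schwarz hdiff hmaps (by rw [hf0]) (by simpa using mem_ball_zero_iff.1 hζb)
        rwa [hfζ] at this
      simp only [Finset.sum_range_one, one_mul]
      exact EReal.coe_le_coe_iff.2
        ((Real.log_le_log_iff ha (lt_of_lt_of_le ha h1)).2 h1)
  · intro f hdiff hmaps hf0 ζ₁ hζ₁ hfζ₁
    have h0 : (f 0).1 = 0 := by rw [hf0]
    constructor
    · intro hlog
      have hζne : ζ₁ ≠ 0 := by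
        intro h
        rw [h, hf0] at hfζ₁
        have := (Prod.ext_iff.1 hfζ₁).1
        exact ha0 (by simpa using this.symm)
      have habs : ‖ζ₁‖ = ‖a‖ := by
        have h1 : Real.exp (Real.log (‖ζ₁‖)) = ‖ζ₁‖ :=
          Real.exp_log (norm_pos_iff.mpr hζne)
        rw [hlog, Real.exp_log ha] at h1
        exact h1.symm
      apply fst_rotation hdiff hmaps h0 hζ₁ hζne
      rw [hfζ₁]
      exact habs.symm
    · rintro ⟨α, hα, hrot⟩
      have h2 : a = α * ζ₁ := by rw [← hrot ζ₁ hζ₁, hfζ₁]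
      have : ‖ζ₁‖ = ‖a‖ := by
        rw [h2, norm_mul, hα, one_mul]
      rw [this]
end
end
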